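/- arXiv:2003.11861 — 6 statements merged into one kernel-verified Lean document; each statement's English description precedes it below -/
import Mathlib

section
/- Let C be an infinite (2k+1)-diagonal matrix with uniformly bounded entries |C(i,j)| ≤ K, and let P(x) = Σ_{l=0}^{M} p_l x^l be a fixed polynomial. Then (1/n)·(Tr(P(C_{n×n})) − Tr((P(C))_{n×n})) → 0 as n → ∞, where Tr of a truncated infinite matrix means the sum of its first n diagonal entries. -/
open scoped BigOperators

noncomputable def matMul (C D : ℕ → ℕ → ℝ) : ℕ → ℕ → ℝ := fun i j => ∑' p, C i p * D p j

noncomputable def matPow (C : ℕ → ℕ → ℝ) : ℕ → ℕ → ℕ → ℝ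
  | 0 => fun i j => if i = j then (1 : ℝ) else 0
  | l + 1 => matMul (matPow C l) C

def trunc (C : ℕ → ℕ → ℝ) (n : ℕ) : ℕ → ℕ → ℝ :=
  fun i j => if i < n ∧ j < n then C i j else 0

/-- The trace of the first `n` diagonal entries. -/
noncomputable def tr (A : ℕ → ℕ → ℝ) (n : ℕ) : ℝ := ∑ i ∈ Finset.range n, A i i

lemma band_pow (k : ℕ) (C : ℕ → ℕ → ℝ)
    (hband : ∀ i j : ℕ, (k : ℤ) < |(i : ℤ) - (j : ℤ)| → C i j = 0) :
    ∀ l i j : ℕ, ((l * k : ℕ) : ℤ) < |(i : ℤ) - (j : ℤ)| → matPow C l i j = 0 := by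
  intro l
  induction l with
  | zero =>
    intro i j h
    have : i ≠ j := by
      intro hij; subst hij; simp at h
    simp [matPow, this]
  | succ l ih =>
    intro i j h
    show ∑' q, matPow C l i q * C q j = 0
    have hz : ∀ q : ℕ, matPow C l i q * C q j = 0 := by
      intro q
      by_cases hq : ((l * k : ℕ) : ℤ) < |(i : ℤ) - (q : ℤ)|
      · rw [ih i q hq, zero_mul]
      · push_neg at hq
        have htri := abs_sub_le (i : ℤ) (q : ℤ) (j : ℤ)
        have hk : (k : ℤ) < |(q : ℤ) - (j : ℤ)| := by
          push_cast at h hq ⊢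
          linarith
        rw [hband q j hk, mul_zero]
    rw [tsum_congr hz, tsum_zero]

lemma bound_pow (k : ℕ) (K' : ℝ) (C : ℕ → ℕ → ℝ)
    (hband : ∀ i j : ℕ, (k : ℤ) < |(i : ℤ) - (j : ℤ)| → C i j = 0)
    (hbdd : ∀ i j : ℕ, |C i j| ≤ K') (hK : 1 ≤ K') :
    ∀ l i j : ℕ, |matPow C l i j| ≤ ((2 * k + 1 : ℝ) * K') ^ l := by
  have hK0 : (0 : ℝ) ≤ K' := le_trans zero_le_one hK
  have hB0 : (0 : ℝ) ≤ (2 * k + 1 : ℝ) * K' := by positivity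
  intro l
  induction l with
  | zero =>
    intro i j
    simp only [matPow, pow_zero]
    split <;> simp
  | succ l ih =>
    intro i j
    show |∑' q, matPow C l i q * C q j| ≤ _
    have hsupp : ∀ q ∉ Finset.Icc (j - k) (j + k), matPow C l i q * C q j = 0 := by
      intro q hq
      simp only [Finset.mem_Icc, not_and_or, not_le] at hq
      have hk : (k : ℤ) < |(q : ℤ) - (j : ℤ)| := by
        rw [lt_abs]
        push_cast
        omega
      rw [hband q j hk, mul_zero]
    rw [tsum_eq_sum hsupp]
    calc |∑ q ∈ Finset.Icc (j - k) (j + k), matPow C l i q * C q j|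
        ≤ ∑ q ∈ Finset.Icc (j - k) (j + k), |matPow C l i q * C q j| :=
          Finset.abs_sum_le_sum_abs _ _
      _ ≤ ∑ q ∈ Finset.Icc (j - k) (j + k), ((2 * k + 1 : ℝ) * K') ^ l * K' := by
          apply Finset.sum_le_sum
          intro q _
          rw [abs_mul]
          exact mul_le_mul (ih i q) (hbdd q j) (abs_nonneg _) (pow_nonneg hB0 l)
      _ ≤ (2 * k + 1 : ℝ) * (((2 * k + 1 : ℝ) * K') ^ l * K') := by
          rw [Finset.sum_const, Nat.card_Icc, nsmul_eq_mul]
          apply mul_le_mul_of_nonneg_right _ (by positivity)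
          have : j + k + 1 - (j - k) ≤ 2 * k + 1 := by omega
          calc ((j + k + 1 - (j - k) : ℕ) : ℝ) ≤ ((2 * k + 1 : ℕ) : ℝ) := by
                exact_mod_cast this
            _ = (2 * k + 1 : ℝ) := by push_cast; ring
      _ = ((2 * k + 1 : ℝ) * K') ^ (l + 1) := by ring

lemma trunc_band (k n : ℕ) (C : ℕ → ℕ → ℝ)
    (hband : ∀ i j : ℕ, (k : ℤ) < |(i : ℤ) - (j : ℤ)| → C i j = 0) :
    ∀ i j : ℕ, (k : ℤ) < |(i : ℤ) - (j : ℤ)| → trunc C n i j = 0 := by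
  intro i j h
  unfold trunc
  split
  · exact hband i j h
  · rfl

lemma agree_pow (k n : ℕ) (C : ℕ → ℕ → ℝ)
    (hband : ∀ i j : ℕ, (k : ℤ) < |(i : ℤ) - (j : ℤ)| → C i j = 0) :
    ∀ l i j : ℕ, i + l * k < n → j < n →
      matPow (trunc C n) l i j = matPow C l i j := by
  intro l
  induction l with
  | zero => intro i j _ _; rfl
  | succ l ih =>
    intro i j hi hj
    show ∑' q, matPow (trunc C n) l i q * trunc C n q j = ∑' q, matPow C l i q * C q j
    apply tsum_congr
    intro q
    by_cases hq : ((l * k : ℕ) : ℤ) < |(i : ℤ) - (q : ℤ)|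
    · rw [band_pow k (trunc C n) (trunc_band k n C hband) l i q hq,
        band_pow k C hband l i q hq, zero_mul, zero_mul]
    · push_neg at hq
      have hq2 : (q : ℤ) ≤ (i : ℤ) + ((l * k : ℕ) : ℤ) := by
        rw [abs_le] at hq
        linarith [hq.1]
      have hmul : i + l * k + k = i + (l + 1) * k := by ring
      have hqn : q < n := by omega
      have hiq : i + l * k < n := by omega
      rw [ih i q hiq hqn]
      have : trunc C n q j = C q j := by
        unfold trunc
        rw [if_pos ⟨hqn, hj⟩]
      rw [this]

/-- For a banded matrix with bounded entries and a fixed polynomial `P = Σ p_l x^l`,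
`(1/n)(Tr(P(C_{n×n})) − Tr((P(C))_{n×n})) → 0`. -/
theorem stmt2 (k M : ℕ) (K : ℝ) (C : ℕ → ℕ → ℝ) (p : ℕ → ℝ)
    (hband : ∀ i j : ℕ, (k : ℤ) < |(i : ℤ) - (j : ℤ)| → C i j = 0)
    (hbdd : ∀ i j : ℕ, |C i j| < K) :
    Filter.Tendsto (fun n : ℕ =>
      (1 / (n : ℝ)) *
        ((∑ l ∈ Finset.range (M + 1), p l * tr (matPow (trunc C n) l) n) -
          (∑ l ∈ Finset.range (M + 1), p l * tr (trunc (matPow C l) n) n)))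
      Filter.atTop (nhds 0) := by
  set K' : ℝ := max K 1 with hK'def
  have hK1 : (1 : ℝ) ≤ K' := le_max_right _ _
  have hK0 : (0 : ℝ) ≤ K' := le_trans zero_le_one hK1
  have hbddK : ∀ i j, |C i j| ≤ K' := fun i j =>
    le_trans (le_of_lt (hbdd i j)) (le_max_left _ _)
  set B : ℝ := (2 * k + 1 : ℝ) * K' with hBdef
  have hB0 : (0 : ℝ) ≤ B := by positivity
  have htruncbdd : ∀ n i j, |trunc C n i j| ≤ K' := by
    intro n i j
    unfold trunc
    split
    · exact hbddK i j
    · simpa using hK0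
  -- per-term trace bound
  have key : ∀ n, ∀ l ∈ Finset.range (M + 1),
      |tr (matPow (trunc C n) l) n - tr (trunc (matPow C l) n) n|
        ≤ (M * k : ℝ) * (2 * B ^ l) := by
    intro n l hlmem
    rw [Finset.mem_range] at hlmem
    have hdiag : tr (matPow (trunc C n) l) n - tr (trunc (matPow C l) n) n
        = ∑ i ∈ Finset.range n, (matPow (trunc C n) l i i - matPow C l i i) := by
      unfold tr
      rw [← Finset.sum_sub_distrib]
      apply Finset.sum_congr rfl
      intro i hi
      rw [Finset.mem_range] at hi
      have : trunc (matPow C l) n i i = matPow C l i i := by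
        unfold trunc; rw [if_pos ⟨hi, hi⟩]
      rw [this]
    rw [hdiag]
    have hzero : ∀ i ∈ Finset.range n, ¬ (n ≤ i + l * k) →
        matPow (trunc C n) l i i - matPow C l i i = 0 := by
      intro i hi hni
      push_neg at hni
      rw [Finset.mem_range] at hi
      rw [agree_pow k n C hband l i i hni hi, sub_self]
    rw [← Finset.sum_filter_of_ne (by
      intro i hi h
      by_contra hcon
      exact h (hzero i hi hcon))]
    set s := Finset.filter (fun i => n ≤ i + l * k) (Finset.range n) with hs
    have hcard : s.card ≤ M * k := by
      have hsub : s ⊆ Finset.Ico (n - M * k) n := by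
        intro i hi
        rw [hs, Finset.mem_filter, Finset.mem_range] at hi
        rw [Finset.mem_Ico]
        have hl : l ≤ M := by omega
        have : l * k ≤ M * k := Nat.mul_le_mul_right k hl
        omega
      calc s.card ≤ (Finset.Ico (n - M * k) n).card := Finset.card_le_card hsub
        _ = n - (n - M * k) := Nat.card_Ico _ _
        _ ≤ M * k := by omega
    calc |∑ i ∈ s, (matPow (trunc C n) l i i - matPow C l i i)|
        ≤ ∑ i ∈ s, |matPow (trunc C n) l i i - matPow C l i i| :=
          Finset.abs_sum_le_sum_abs _ _
      _ ≤ ∑ i ∈ s, (2 * B ^ l) := by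
          apply Finset.sum_le_sum
          intro i _
          calc |matPow (trunc C n) l i i - matPow C l i i|
              ≤ |matPow (trunc C n) l i i| + |matPow C l i i| := abs_sub _ _
            _ ≤ B ^ l + B ^ l := add_le_add
                (bound_pow k K' (trunc C n) (trunc_band k n C hband)
                  (htruncbdd n) hK1 l i i)
                (bound_pow k K' C hband hbddK hK1 l i i)
            _ = 2 * B ^ l := by ring
      _ = (s.card : ℝ) * (2 * B ^ l) := by rw [Finset.sum_const, nsmul_eq_mul]
      _ ≤ (M * k : ℝ) * (2 * B ^ l) := by
          apply mul_le_mul_of_nonneg_right _ (by positivity)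
          calc (s.card : ℝ) ≤ ((M * k : ℕ) : ℝ) := by exact_mod_cast hcard
            _ = (M * k : ℝ) := by push_cast; ring
  set A : ℝ := ∑ l ∈ Finset.range (M + 1), |p l| * ((M * k : ℝ) * (2 * B ^ l)) with hA
  have hA0 : 0 ≤ A := Finset.sum_nonneg (fun l _ => by positivity)
  refine squeeze_zero_norm (a := fun n : ℕ => A * (1 / (n : ℝ))) (fun n => ?_) ?_
  · simp only [Real.norm_eq_abs, abs_mul]
    rw [mul_comm A (1 / (n : ℝ))]
    have h1 : |1 / (n : ℝ)| = 1 / (n : ℝ) := abs_of_nonneg (by positivity)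
    rw [h1]
    apply mul_le_mul_of_nonneg_left _ (by positivity : (0:ℝ) ≤ 1 / (n:ℝ))
    rw [← Finset.sum_sub_distrib]
    calc |∑ l ∈ Finset.range (M + 1),
            (p l * tr (matPow (trunc C n) l) n - p l * tr (trunc (matPow C l) n) n)|
        ≤ ∑ l ∈ Finset.range (M + 1),
            |p l * tr (matPow (trunc C n) l) n - p l * tr (trunc (matPow C l) n) n| :=
          Finset.abs_sum_le_sum_abs _ _
      _ ≤ A := by
          rw [hA]
          apply Finset.sum_le_sum
          intro l hl
          rw [← mul_sub, abs_mul]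
          exact mul_le_mul_of_nonneg_left (key n l hl) (abs_nonneg _)
  · simpa using (tendsto_one_div_atTop_nhds_zero_nat).const_mul A
end

section
/- For an infinite (2k+1)-diagonal matrix C with entries bounded by K, and any l ≥ 1, one has |Tr((C_{n×n})^l) − Tr((C^l)_{n×n})| ≤ k(l-1)·(2kl+1)^l·K^l for every n; in particular (1/n)|Tr((C_{n×n})^l) − Tr((C^l)_{n×n})| → 0. -/
open scoped BigOperators

lemma matPow_band {k : ℕ} {C : ℕ → ℕ → ℝ}
    (hband : ∀ i j : ℕ, (k : ℤ) < |(i : ℤ) - (j : ℤ)| → C i j = 0) :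
    ∀ (l i j : ℕ), (k : ℤ) * l < |(i : ℤ) - (j : ℤ)| → matPow C l i j = 0 := by
  intro l
  induction l with
  | zero =>
    intro i j h
    have : i ≠ j := by intro he; subst he; simp at h
    simp [matPow, this]
  | succ l ih =>
    intro i j h
    show matMul (matPow C l) C i j = 0
    unfold matMul
    have hz : ∀ p : ℕ, matPow C l i p * C p j = 0 := by
      intro p
      rcases le_or_gt (|(i : ℤ) - (p : ℤ)|) ((k : ℤ) * l) with h1 | h1
      · have h2 : (k : ℤ) < |(p : ℤ) - (j : ℤ)| := by
          have ht := abs_sub_le (i : ℤ) (p : ℤ) (j : ℤ)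
          push_cast at h
          nlinarith
        rw [hband p j h2, mul_zero]
      · rw [ih i p h1, zero_mul]
    calc (∑' p, matPow C l i p * C p j) = ∑' _ : ℕ, (0 : ℝ) := tsum_congr hz
      _ = 0 := tsum_zero

lemma matPow_bound {k : ℕ} {K : ℝ} {C : ℕ → ℕ → ℝ}
    (hband : ∀ i j : ℕ, (k : ℤ) < |(i : ℤ) - (j : ℤ)| → C i j = 0)
    (hbdd : ∀ i j, |C i j| ≤ K) (hK : 0 ≤ K) :
    ∀ l i j, |matPow C l i j| ≤ ((2 * (k : ℝ) + 1) * K) ^ l := by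
  intro l
  induction l with
  | zero =>
    intro i j
    simp only [matPow, pow_zero]
    split <;> simp
  | succ l ih =>
    intro i j
    show |matMul (matPow C l) C i j| ≤ _
    unfold matMul
    have hsupp : ∀ p ∉ Finset.Icc (j - k) (j + k), matPow C l i p * C p j = 0 := by
      intro p hp
      rw [Finset.mem_Icc] at hp
      have h2 : (k : ℤ) < |(p : ℤ) - (j : ℤ)| := by
        rcases (by omega : p + k < j ∨ j + k < p) with h | h
        · rw [abs_sub_comm]
          calc (k : ℤ) < (j : ℤ) - (p : ℤ) := by omega
            _ ≤ |(j : ℤ) - (p : ℤ)| := le_abs_self _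
        · calc (k : ℤ) < (p : ℤ) - (j : ℤ) := by omega
            _ ≤ |(p : ℤ) - (j : ℤ)| := le_abs_self _
      rw [hband p j h2, mul_zero]
    rw [tsum_eq_sum hsupp]
    calc |∑ p ∈ Finset.Icc (j - k) (j + k), matPow C l i p * C p j|
        ≤ ∑ p ∈ Finset.Icc (j - k) (j + k), |matPow C l i p * C p j| :=
          Finset.abs_sum_le_sum_abs _ _
      _ ≤ ∑ _p ∈ Finset.Icc (j - k) (j + k), ((2 * (k : ℝ) + 1) * K) ^ l * K := by
          apply Finset.sum_le_sum
          intro p _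
          rw [abs_mul]
          exact mul_le_mul (ih i p) (hbdd p j) (abs_nonneg _) (by positivity)
      _ = ((Finset.Icc (j - k) (j + k)).card : ℝ) * (((2 * (k : ℝ) + 1) * K) ^ l * K) := by
          rw [Finset.sum_const, nsmul_eq_mul]
      _ ≤ (2 * (k : ℝ) + 1) * (((2 * (k : ℝ) + 1) * K) ^ l * K) := by
          apply mul_le_mul_of_nonneg_right _ (by positivity)
          have hc : (Finset.Icc (j - k) (j + k)).card ≤ 2 * k + 1 := by
            rw [Nat.card_Icc]; omega
          calc ((Finset.Icc (j - k) (j + k)).card : ℝ) ≤ ((2 * k + 1 : ℕ) : ℝ) := by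
                exact_mod_cast hc
            _ = 2 * (k : ℝ) + 1 := by push_cast; ring
      _ = ((2 * (k : ℝ) + 1) * K) ^ (l + 1) := by ring

lemma matPow_trunc_eq {k n : ℕ} {C : ℕ → ℕ → ℝ}
    (hband : ∀ i j : ℕ, (k : ℤ) < |(i : ℤ) - (j : ℤ)| → C i j = 0) :
    ∀ l i j, i + k * (l - 1) < n → j < n →
      matPow (trunc C n) l i j = matPow C l i j := by
  intro l
  induction l with
  | zero => intro i j _ _; rfl
  | succ l ih =>
    intro i j hi hj
    have hi' : i + k * l < n := hi
    show matMul (matPow (trunc C n) l) (trunc C n) i j = matMul (matPow C l) C i j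
    unfold matMul
    apply tsum_congr
    intro p
    by_cases hp : p < n
    · have hle : i + k * (l - 1) < n := by
        have h1 := Nat.add_le_add_left (Nat.mul_le_mul_left k (Nat.sub_le l 1)) i
        exact lt_of_le_of_lt h1 hi'
      rw [ih i p hle hp]
      have : trunc C n p j = C p j := by simp [trunc, hp, hj]
      rw [this]
    · have h1 : trunc C n p j = 0 := by simp [trunc, hp]
      have hm : i + k * l < p := lt_of_lt_of_le hi' (le_of_not_gt hp)
      have hm' : (i : ℤ) + (k : ℤ) * l < (p : ℤ) := by exact_mod_cast hm
      have h2 : matPow C l i p = 0 := by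
        apply matPow_band hband
        calc (k : ℤ) * l < (p : ℤ) - (i : ℤ) := by linarith
          _ ≤ |(p : ℤ) - (i : ℤ)| := le_abs_self _
          _ = |(i : ℤ) - (p : ℤ)| := abs_sub_comm _ _
      rw [h1, h2, mul_zero, zero_mul]

lemma key_nat (k l : ℕ) (hk : 1 ≤ k) (hl : 2 ≤ l) :
    2 * (2 * k + 1) ^ l ≤ (2 * k * l + 1) ^ l := by
  obtain ⟨m, rfl⟩ := Nat.exists_eq_add_of_le hl
  calc 2 * (2 * k + 1) ^ (2 + m) = (2 * (2 * k + 1) ^ 2) * (2 * k + 1) ^ m := by ring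
    _ ≤ (4 * k + 1) ^ 2 * (4 * k + 1) ^ m :=
        Nat.mul_le_mul (by nlinarith) (Nat.pow_le_pow_left (by omega) m)
    _ = (4 * k + 1) ^ (2 + m) := by ring
    _ ≤ (2 * k * (2 + m) + 1) ^ (2 + m) := Nat.pow_le_pow_left (by nlinarith) _

lemma key_nat' (k l : ℕ) :
    k * (l - 1) * (2 * (2 * k + 1) ^ l) ≤ k * (l - 1) * (2 * k * l + 1) ^ l := by
  rcases Nat.eq_zero_or_pos (k * (l - 1)) with h | h
  · simp [h]
  · have hk : 1 ≤ k := by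
      rcases Nat.eq_zero_or_pos k with hk0 | hk0
      · simp [hk0] at h
      · exact hk0
    have hl : 2 ≤ l := by
      rcases Nat.lt_or_ge l 2 with hl0 | hl0
      · interval_cases l <;> simp_all
      · exact hl0
    exact Nat.mul_le_mul_left _ (key_nat k l hk hl)

/-- Quantitative trace comparison for powers of banded matrices, and the resulting limit. -/
theorem stmt3 (k : ℕ) (K : ℝ) (C : ℕ → ℕ → ℝ)
    (hband : ∀ i j : ℕ, (k : ℤ) < |(i : ℤ) - (j : ℤ)| → C i j = 0)
    (hbdd : ∀ i j : ℕ, |C i j| ≤ K)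
    (l : ℕ) (hl : 1 ≤ l) :
    (∀ n : ℕ, |tr (matPow (trunc C n) l) n - tr (trunc (matPow C l) n) n|
        ≤ (k : ℝ) * ((l : ℝ) - 1) * ((2 * k * l + 1 : ℕ) : ℝ) ^ l * K ^ l) ∧
    Filter.Tendsto
      (fun n : ℕ => (1 / (n : ℝ)) * |tr (matPow (trunc C n) l) n - tr (trunc (matPow C l) n) n|)
      Filter.atTop (nhds 0) := by
  have hK : 0 ≤ K := le_trans (abs_nonneg _) (hbdd 0 0)
  have hmain : ∀ n : ℕ, |tr (matPow (trunc C n) l) n - tr (trunc (matPow C l) n) n|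
      ≤ (k : ℝ) * ((l : ℝ) - 1) * ((2 * k * l + 1 : ℕ) : ℝ) ^ l * K ^ l := by
    intro n
    have hbandA : ∀ i j : ℕ, (k : ℤ) < |(i : ℤ) - (j : ℤ)| → trunc C n i j = 0 := by
      intro i j h
      unfold trunc
      split
      · exact hband i j h
      · rfl
    have hbddA : ∀ i j, |trunc C n i j| ≤ K := by
      intro i j
      unfold trunc; split
      · exact hbdd i j
      · simpa using hK
    set s : Finset ℕ := (Finset.range n).filter (fun i => n ≤ i + k * (l - 1)) with hs
    have hdiff : tr (matPow (trunc C n) l) n - tr (trunc (matPow C l) n) n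
        = ∑ i ∈ s, (matPow (trunc C n) l i i - matPow C l i i) := by
      rw [tr, tr, ← Finset.sum_sub_distrib]
      have htr : ∀ i ∈ Finset.range n,
          matPow (trunc C n) l i i - trunc (matPow C l) n i i
            = matPow (trunc C n) l i i - matPow C l i i := by
        intro i hi
        rw [Finset.mem_range] at hi
        have : trunc (matPow C l) n i i = matPow C l i i := by simp [trunc, hi]
        rw [this]
      rw [Finset.sum_congr rfl htr]
      symm
      apply Finset.sum_filter_of_ne
      intro i hi hne
      rw [Finset.mem_range] at hi
      by_contra hcon
      push_neg at hcon
      rw [matPow_trunc_eq hband l i i hcon hi] at hne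
      simp at hne
    have hcard : s.card ≤ k * (l - 1) := by
      have hsub : s ⊆ Finset.Ico (n - k * (l - 1)) n := by
        intro i hi
        rw [hs, Finset.mem_filter, Finset.mem_range] at hi
        rw [Finset.mem_Ico]
        exact ⟨Nat.sub_le_iff_le_add.mpr hi.2, hi.1⟩
      have h2 : ∀ a b : ℕ, a - (a - b) ≤ b := fun a b => by omega
      calc s.card ≤ (Finset.Ico (n - k * (l - 1)) n).card := Finset.card_le_card hsub
        _ = n - (n - k * (l - 1)) := Nat.card_Ico _ _
        _ ≤ k * (l - 1) := h2 n _
    have hterm : ∀ i ∈ s, |matPow (trunc C n) l i i - matPow C l i i|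
        ≤ 2 * ((2 * (k : ℝ) + 1) * K) ^ l := by
      intro i _
      calc |matPow (trunc C n) l i i - matPow C l i i|
          ≤ |matPow (trunc C n) l i i| + |matPow C l i i| := abs_sub _ _
        _ ≤ ((2 * (k : ℝ) + 1) * K) ^ l + ((2 * (k : ℝ) + 1) * K) ^ l :=
            add_le_add (matPow_bound hbandA hbddA hK l i i) (matPow_bound hband hbdd hK l i i)
        _ = 2 * ((2 * (k : ℝ) + 1) * K) ^ l := by ring
    calc |tr (matPow (trunc C n) l) n - tr (trunc (matPow C l) n) n|
        = |∑ i ∈ s, (matPow (trunc C n) l i i - matPow C l i i)| := by rw [hdiff]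
      _ ≤ ∑ i ∈ s, |matPow (trunc C n) l i i - matPow C l i i| :=
          Finset.abs_sum_le_sum_abs _ _
      _ ≤ ∑ _i ∈ s, 2 * ((2 * (k : ℝ) + 1) * K) ^ l := Finset.sum_le_sum hterm
      _ = (s.card : ℝ) * (2 * ((2 * (k : ℝ) + 1) * K) ^ l) := by
          rw [Finset.sum_const, nsmul_eq_mul]
      _ ≤ ((k * (l - 1) : ℕ) : ℝ) * (2 * ((2 * (k : ℝ) + 1) * K) ^ l) := by
          apply mul_le_mul_of_nonneg_right _ (by positivity)
          exact_mod_cast hcard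
      _ = ((k * (l - 1) * (2 * (2 * k + 1) ^ l) : ℕ) : ℝ) * K ^ l := by
          push_cast
          rw [mul_pow]
          ring
      _ ≤ ((k * (l - 1) * (2 * k * l + 1) ^ l : ℕ) : ℝ) * K ^ l := by
          apply mul_le_mul_of_nonneg_right _ (by positivity)
          exact_mod_cast key_nat' k l
      _ = (k : ℝ) * ((l : ℝ) - 1) * ((2 * k * l + 1 : ℕ) : ℝ) ^ l * K ^ l := by
          push_cast [Nat.cast_sub hl]
          ring
  refine ⟨hmain, ?_⟩
  apply squeeze_zero (g := fun n : ℕ =>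
      ((k : ℝ) * ((l : ℝ) - 1) * ((2 * k * l + 1 : ℕ) : ℝ) ^ l * K ^ l) / n)
  · intro n; positivity
  · intro n
    have h1 : (0 : ℝ) ≤ 1 / (n : ℝ) := by positivity
    calc (1 / (n : ℝ)) * |tr (matPow (trunc C n) l) n - tr (trunc (matPow C l) n) n|
        ≤ (1 / (n : ℝ)) * ((k : ℝ) * ((l : ℝ) - 1) * ((2 * k * l + 1 : ℕ) : ℝ) ^ l * K ^ l) :=
          mul_le_mul_of_nonneg_left (hmain n) h1
      _ = ((k : ℝ) * ((l : ℝ) - 1) * ((2 * k * l + 1 : ℕ) : ℝ) ^ l * K ^ l) / n := by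
          rw [one_div, inv_mul_eq_div]
  · exact tendsto_const_div_atTop_nhds_zero_nat _
end

section
/- Endpoint values of the averaged coefficients: with U_k defined from the coefficients d_0,…,d_{L−1} of b̃(x) = Σ_{k=0}^{L−1} d_k x^k by U_{2l} = Σ_{p=max(l,1)}^{⌊L/2⌋} (d_{2p−1}/(2p))·C(2p, p−l)·2^{−2p} and U_{2l+1} = Σ_{p=l}^{⌊(L−1)/2⌋} (d_{2p}/(2p+1))·C(2p+1, p−l)·2^{−2p−1}, one has 2 Σ_{k=1}^{L} (±1)^k U_k = Σ_{k=1}^{L} (±1)^k d_{k−1}/k − U_0, i.e. 2Σ_{k=1}^L (±1)^k U_k = Q(±1) where Q(x) = Σ_{k=1}^{L} d_{k−1} x^k / k − U_0. -/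
open scoped BigOperators

/-- Sum over `Icc 1 n` as a shifted range sum. -/
lemma sum_Icc_one (n : ℕ) (f : ℕ → ℝ) :
    ∑ i ∈ Finset.Icc 1 n, f i = ∑ i ∈ Finset.range n, f (i+1) := by
  rw [← Finset.Ico_add_one_right_eq_Icc, Finset.sum_Ico_eq_sum_range]
  simp [add_comm]

/-- Split a range sum by parity. -/
lemma sum_parity (f : ℕ → ℝ) : ∀ n : ℕ, ∑ k ∈ Finset.range n, f k
    = (∑ l ∈ Finset.range ((n+1)/2), f (2*l)) + ∑ l ∈ Finset.range (n/2), f (2*l+1) := by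
  intro n
  induction n with
  | zero => simp
  | succ n ih =>
    rw [Finset.sum_range_succ, ih]
    rcases Nat.even_or_odd n with ⟨m, hm⟩ | ⟨m, hm⟩
    · have hm' : n = 2*m := by omega
      subst hm'
      have h1 : (2*m+1+1)/2 = m+1 := by omega
      have h2 : (2*m+1)/2 = m := by omega
      have h3 : (2*m)/2 = m := by omega
      rw [h1, h2, h3, Finset.sum_range_succ]
      ring
    · subst hm
      have h1 : (2*m+1+1+1)/2 = m+1 := by omega
      have h2 : (2*m+1+1)/2 = m+1 := by omega
      have h3 : (2*m+1)/2 = m := by omega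
      rw [h1, h2, h3, Finset.sum_range_succ (fun x => f (2*x+1))]
      ring

/-- Triangular sum swap, version 1. -/
lemma swap_tri1 (n : ℕ) (f : ℕ → ℕ → ℝ) :
    ∑ l ∈ Finset.range n, ∑ p ∈ Finset.Icc (l+1) n, f l p
      = ∑ p ∈ Finset.Icc 1 n, ∑ l ∈ Finset.range p, f l p := by
  have h1 : ∀ l ∈ Finset.range n, ∑ p ∈ Finset.Icc (l+1) n, f l p
      = ∑ p ∈ Finset.Icc 1 n, if l + 1 ≤ p then f l p else 0 := by
    intro l _
    rw [← Finset.sum_filter]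
    apply Finset.sum_congr _ (fun _ _ => rfl)
    ext p
    simp only [Finset.mem_Icc, Finset.mem_filter]
    omega
  rw [Finset.sum_congr rfl h1, Finset.sum_comm]
  apply Finset.sum_congr rfl
  intro p hp
  rw [← Finset.sum_filter]
  apply Finset.sum_congr _ (fun _ _ => rfl)
  ext l
  simp only [Finset.mem_Icc] at hp
  simp only [Finset.mem_range, Finset.mem_filter]
  omega

/-- Triangular sum swap, version 2. -/
lemma swap_tri2 (m : ℕ) (f : ℕ → ℕ → ℝ) :
    ∑ l ∈ Finset.range (m+1), ∑ p ∈ Finset.Icc l m, f l p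
      = ∑ p ∈ Finset.range (m+1), ∑ l ∈ Finset.range (p+1), f l p := by
  have h1 : ∀ l ∈ Finset.range (m+1), ∑ p ∈ Finset.Icc l m, f l p
      = ∑ p ∈ Finset.range (m+1), if l ≤ p then f l p else 0 := by
    intro l _
    rw [← Finset.sum_filter]
    apply Finset.sum_congr _ (fun _ _ => rfl)
    ext p
    simp only [Finset.mem_Icc, Finset.mem_filter, Finset.mem_range]
    omega
  rw [Finset.sum_congr rfl h1, Finset.sum_comm]
  apply Finset.sum_congr rfl
  intro p hp
  rw [← Finset.sum_filter]
  apply Finset.sum_congr _ (fun _ _ => rfl)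
  ext l
  simp only [Finset.mem_range] at hp
  simp only [Finset.mem_range, Finset.mem_filter]
  omega

/-- Halfway binomial sum for even upper index. -/
lemma even_halfway (p : ℕ) :
    2 * (∑ i ∈ Finset.range p, Nat.choose (2*p) i) + Nat.choose (2*p) p = 4^p := by
  have h := Nat.sum_range_choose_halfway p
  have key : ∑ i ∈ Finset.range (p+1), Nat.choose (2*p+1) i
      = (∑ i ∈ Finset.range p, Nat.choose (2*p) i)
        + ∑ i ∈ Finset.range (p+1), Nat.choose (2*p) i := by
    rw [Finset.sum_range_succ' (fun i => Nat.choose (2*p+1) i)]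
    have : ∀ i, Nat.choose (2*p+1) (i+1) = Nat.choose (2*p) i + Nat.choose (2*p) (i+1) :=
      fun i => Nat.choose_succ_succ (2*p) i
    simp only [this]
    rw [Finset.sum_add_distrib]
    rw [Finset.sum_range_succ' (fun i => Nat.choose (2*p) i)]
    simp [Nat.choose_zero_right]
    ring
  rw [key, Finset.sum_range_succ] at h
  omega

/-- Generic algebraic step for the even part. -/
lemma alg_even (v S C T : ℝ) (hT : T ≠ 0) (h : 2*S + C = T) :
    2 * (v * S / T) = v - v * C / T := by
  field_simp
  linear_combination v * h

/-- The averaged recurrence coefficients `U_k` built from the coefficients of `b̃`. -/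
noncomputable def Ucoef (d : ℕ → ℝ) (L : ℕ) : ℕ → ℝ := fun k =>
  if k % 2 = 0 then
    ∑ p ∈ Finset.Icc (max (k / 2) 1) (L / 2),
      d (2 * p - 1) / (2 * p) * (Nat.choose (2 * p) (p - k / 2)) / 2 ^ (2 * p)
  else
    ∑ p ∈ Finset.Icc (k / 2) ((L - 1) / 2),
      d (2 * p) / (2 * p + 1) * (Nat.choose (2 * p + 1) (p - k / 2)) / 2 ^ (2 * p + 1)

/-- Endpoint values of the averaged coefficients:
`2 Σ_{k=1}^L (±1)^k U_k = Σ_{k=1}^L (±1)^k d_{k−1}/k − U_0 = Q(±1)`. -/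
theorem stmt12 (L : ℕ) (hL : 1 ≤ L) (d : ℕ → ℝ) (ε : ℝ) (hε : ε = 1 ∨ ε = -1) :
    2 * ∑ k ∈ Finset.Icc 1 L, ε ^ k * Ucoef d L k
      = (∑ k ∈ Finset.Icc 1 L, ε ^ k * d (k - 1) / k) - Ucoef d L 0 := by
  have hε2 : ε ^ 2 = 1 := by rcases hε with h | h <;> rw [h] <;> norm_num
  have hεe : ∀ l : ℕ, ε ^ (2*l+2) = 1 := by
    intro l
    have : ε ^ (2*l+2) = (ε^2) ^ (l+1) := by ring
    rw [this, hε2, one_pow]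
  have hεo : ∀ l : ℕ, ε ^ (2*l+1) = ε := by
    intro l
    have : ε ^ (2*l+1) = (ε^2) ^ l * ε := by ring
    rw [this, hε2, one_pow, one_mul]
  set N := L / 2 with hN
  set M := (L - 1) / 2 with hM
  have hM1 : (L+1)/2 = M + 1 := by omega
  -- parity split of any sum over Icc 1 L
  have split : ∀ f : ℕ → ℝ, ∑ k ∈ Finset.Icc 1 L, f k
      = (∑ l ∈ Finset.range (M+1), f (2*l+1)) + ∑ l ∈ Finset.range N, f (2*l+2) := by
    intro f
    rw [sum_Icc_one, sum_parity (fun i => f (i+1)) L, hM1, ← hN]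
  -- values of Ucoef
  have hUodd : ∀ l : ℕ, Ucoef d L (2*l+1)
      = ∑ p ∈ Finset.Icc l M, d (2*p) / (2*p+1) * (Nat.choose (2*p+1) (p-l)) / 2^(2*p+1) := by
    intro l
    have h1 : (2*l+1) % 2 = 1 := by omega
    have h2 : (2*l+1) / 2 = l := by omega
    simp only [Ucoef, h1, h2, ← hM]
    simp
  have hUeven : ∀ l : ℕ, Ucoef d L (2*l+2)
      = ∑ p ∈ Finset.Icc (l+1) N, d (2*p-1) / (2*p) * (Nat.choose (2*p) (p-(l+1))) / 2^(2*p) := by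
    intro l
    have h1 : (2*l+2) % 2 = 0 := by omega
    have h2 : (2*l+2) / 2 = l+1 := by omega
    have h3 : max (l+1) 1 = l+1 := by omega
    simp only [Ucoef, h1, h2, h3, ← hN]
    simp
  have hU0 : Ucoef d L 0
      = ∑ p ∈ Finset.Icc 1 N, d (2*p-1) / (2*p) * (Nat.choose (2*p) p) / 2^(2*p) := by
    simp only [Ucoef, ← hN]
    simp
  rw [split (fun k => ε ^ k * Ucoef d L k), split (fun k => ε ^ k * d (k-1) / k)]
  simp only [hεe, hεo, one_mul, hUodd, hUeven]
  have Odd : 2 * ∑ x ∈ Finset.range (M+1), ∑ p ∈ Finset.Icc x M,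
        d (2*p) / (2*(p:ℝ)+1) * ((2*p+1).choose (p-x) : ℝ) / 2^(2*p+1)
      = ∑ x ∈ Finset.range (M+1), d (2*x+1-1) / ((2*x+1 : ℕ) : ℝ) := by
    rw [swap_tri2, Finset.mul_sum]
    apply Finset.sum_congr rfl
    intro p _
    have hrefl : ∑ l ∈ Finset.range (p+1), ((2*p+1).choose (p-l) : ℝ) = (4:ℝ)^p := by
      have h := Finset.sum_range_reflect (fun j => ((2*p+1).choose j : ℝ)) (p+1)
      have h2 : ∑ l ∈ Finset.range (p+1), ((2*p+1).choose (p-l) : ℝ)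
          = ∑ l ∈ Finset.range (p+1), ((2*p+1).choose (p+1-1-l) : ℝ) :=
        Finset.sum_congr rfl fun l _ => by norm_num
      rw [h2, h, ← Nat.cast_sum, Nat.sum_range_choose_halfway p]
      push_cast
      ring
    have hfac : ∑ l ∈ Finset.range (p+1),
          d (2*p) / (2*(p:ℝ)+1) * ((2*p+1).choose (p-l) : ℝ) / 2^(2*p+1)
        = d (2*p) / (2*(p:ℝ)+1) * (∑ l ∈ Finset.range (p+1), ((2*p+1).choose (p-l) : ℝ))
            / 2^(2*p+1) := by
      rw [Finset.mul_sum, Finset.sum_div]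
    rw [hfac, hrefl]
    have hd : d (2*p+1-1) = d (2*p) := by norm_num
    have hcast : ((2*p+1 : ℕ) : ℝ) = 2*(p:ℝ)+1 := by push_cast; ring
    rw [hd, hcast]
    have h4 : (4:ℝ)^p = 2^(2*p) := by rw [pow_mul]; norm_num
    rw [h4, pow_succ]
    have hne : (2:ℝ)^(2*p) ≠ 0 := by positivity
    field_simp
  have Even : 2 * ∑ x ∈ Finset.range N, ∑ p ∈ Finset.Icc (x+1) N,
        d (2*p-1) / (2*(p:ℝ)) * ((2*p).choose (p-(x+1)) : ℝ) / 2^(2*p)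
      = (∑ x ∈ Finset.range N, d (2*x+2-1) / ((2*x+2 : ℕ) : ℝ)) - Ucoef d L 0 := by
    rw [swap_tri1, hU0,
      sum_Icc_one N (fun p => ∑ l ∈ Finset.range p,
        d (2*p-1) / (2*(p:ℝ)) * ((2*p).choose (p-(l+1)) : ℝ) / 2^(2*p)),
      sum_Icc_one N (fun p => d (2*p-1) / (2*(p:ℝ)) * ((2*p).choose p : ℝ) / 2^(2*p)),
      Finset.mul_sum, ← Finset.sum_sub_distrib]
    apply Finset.sum_congr rfl
    intro i _
    have hrefl : ∑ l ∈ Finset.range (i+1), (((2*(i+1)).choose ((i+1)-(l+1))) : ℝ)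
        = ∑ l ∈ Finset.range (i+1), (((2*(i+1)).choose l) : ℝ) := by
      have h := Finset.sum_range_reflect (fun j => ((2*(i+1)).choose j : ℝ)) (i+1)
      rw [← h]
      exact Finset.sum_congr rfl fun l _ => by congr 2; omega
    have hfac : ∑ l ∈ Finset.range (i+1),
          d (2*(i+1)-1) / (2*((i+1:ℕ):ℝ)) * (((2*(i+1)).choose ((i+1)-(l+1))) : ℝ) / 2^(2*(i+1))
        = d (2*(i+1)-1) / (2*((i+1:ℕ):ℝ))
            * (∑ l ∈ Finset.range (i+1), (((2*(i+1)).choose ((i+1)-(l+1))) : ℝ)) / 2^(2*(i+1)) := by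
      rw [Finset.mul_sum, Finset.sum_div]
    rw [hfac, hrefl]
    have hkey : 2 * (∑ l ∈ Finset.range (i+1), (((2*(i+1)).choose l) : ℝ))
        + ((2*(i+1)).choose (i+1) : ℝ) = 2^(2*(i+1)) := by
      have h4 : ((2:ℝ))^(2*(i+1)) = ((4^(i+1) : ℕ) : ℝ) := by
        push_cast
        rw [pow_mul]
        norm_num
      rw [h4]
      exact_mod_cast even_halfway (i+1)
    have hd : d (2*i+2-1) = d (2*(i+1)-1) := by congr 1
    have hcast : ((2*i+2 : ℕ) : ℝ) = 2*((i+1:ℕ):ℝ) := by push_cast; ring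
    rw [hd, hcast]
    have hne : (2:ℝ)^(2*(i+1)) ≠ 0 := by positivity
    exact alg_even _ _ _ _ hne hkey
  have hpull1 : ∑ x ∈ Finset.range (M+1), ε * ∑ p ∈ Finset.Icc x M,
        d (2*p) / (2*(p:ℝ)+1) * ((2*p+1).choose (p-x) : ℝ) / 2^(2*p+1)
      = ε * ∑ x ∈ Finset.range (M+1), ∑ p ∈ Finset.Icc x M,
        d (2*p) / (2*(p:ℝ)+1) * ((2*p+1).choose (p-x) : ℝ) / 2^(2*p+1) :=
    (Finset.mul_sum _ _ _).symm
  have hpull2 : ∑ x ∈ Finset.range (M+1), ε * d (2*x+1-1) / ((2*x+1 : ℕ) : ℝ)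
      = ε * ∑ x ∈ Finset.range (M+1), d (2*x+1-1) / ((2*x+1 : ℕ) : ℝ) := by
    rw [Finset.mul_sum]
    exact Finset.sum_congr rfl fun x _ => by rw [mul_div_assoc]
  rw [hpull1, hpull2]
  linear_combination ε * Odd + Even
end

section
/- Quadratic norm identity for one-step exceptional polynomials: let T[y] = p y'' + q y' (with r = 0) be a Sturm–Liouville operator with eigenpolynomials P_n and eigenvalues λ_n, w a rational function satisfying the Riccati equation p(w' + w²) + q w = λ̃, and b a polynomial with P_n^{[1]} := b P_n' − b w P_n. Then pointwise on the interval, (b P_n' − b w P_n)² · (p w₀ / b²) = (P_n')² p w₀ + λ̃ P_n² w₀ − (P_n² w p w₀)', where w₀ is the classical weight, i.e. (p w₀)' = q w₀. -/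
/-- Quadratic norm identity for one-step exceptional polynomials:
`(b P' − b w P)² (p w₀ / b²) = (P')² p w₀ + λ̃ P² w₀ − (P² w p w₀)'` pointwise, given the
Riccati equation for `w` and the Pearson equation for `w₀`. -/
theorem stmt16 (s : Set ℝ) (hs : IsOpen s) (p q w w0 b Pn : ℝ → ℝ) (lam : ℝ)
    (hb : ∀ x ∈ s, b x ≠ 0)
    (hdp : ∀ x ∈ s, DifferentiableAt ℝ p x)
    (hdw : ∀ x ∈ s, DifferentiableAt ℝ w x)
    (hdw0 : ∀ x ∈ s, DifferentiableAt ℝ w0 x)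
    (hdPn : ∀ x ∈ s, DifferentiableAt ℝ Pn x)
    (hric : ∀ x ∈ s, p x * (deriv w x + w x ^ 2) + q x * w x = lam)
    (hpearson : ∀ x ∈ s, deriv (fun t => p t * w0 t) x = q x * w0 x) :
    ∀ x ∈ s,
      (b x * deriv Pn x - b x * w x * Pn x) ^ 2 * (p x * w0 x / (b x) ^ 2)
        = (deriv Pn x) ^ 2 * (p x * w0 x) + lam * (Pn x) ^ 2 * w0 x
          - deriv (fun t => (Pn t) ^ 2 * w t * (p t * w0 t)) x := by
  intro x hx
  have hd1 : DifferentiableAt ℝ (fun t => (Pn t) ^ 2 * w t) x :=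
    ((hdPn x hx).pow 2).mul (hdw x hx)
  have hd2 : DifferentiableAt ℝ (fun t => p t * w0 t) x :=
    (hdp x hx).mul (hdw0 x hx)
  have hD : deriv (fun t => (Pn t) ^ 2 * w t * (p t * w0 t)) x
      = (2 * Pn x * deriv Pn x * w x + (Pn x) ^ 2 * deriv w x) * (p x * w0 x)
        + (Pn x) ^ 2 * w x * (q x * w0 x) := by
    rw [deriv_fun_mul hd1 hd2, hpearson x hx, deriv_fun_mul (c := fun t => (Pn t) ^ 2) ((hdPn x hx).pow 2) (hdw x hx),
      deriv_fun_pow (hdPn x hx) 2]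
    ring
  rw [hD]
  have hric' := hric x hx
  have hb' := hb x hx
  rw [← hric']
  field_simp
  ring
end

section
/- If the recurrence coefficients of a sequence of orthonormal polynomials q_n on [−1,1] satisfy a_n → 1/2 and b_n → 0 (where x q_n = a_{n+1} q_{n+1} + b_n q_n + a_n q_{n−1}), then for every continuous function f on [−1,1], (1/n) Σ_{i=1}^n f(ξ_{i,n}) → ∫_{−1}^1 f dμ_e, where ξ_{i,n} are the zeros of q_n and μ_e is the arcsine measure dμ_e(x) = dx/(π√(1−x²)). -/
open scoped BigOperators


open Matrix in
lemma traceSpec {n : ℕ} (M : Matrix (Fin n) (Fin n) ℝ) (x : Fin n → ℝ)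
    (hx : Function.Injective x)
    (hv : ∀ k, ∃ v : Fin n → ℝ, v ≠ 0 ∧ M.mulVec v = x k • v) (l : ℕ) :
    (M ^ l).trace = ∑ k, x k ^ l := by
  rcases Nat.eq_zero_or_pos n with rfl | hn
  · simp [Matrix.trace]
  have : NeZero n := ⟨hn.ne'⟩
  choose v hv0 hveq using hv
  set f : Module.End ℝ (Fin n → ℝ) := Matrix.toLinAlgEquiv' M with hf
  have happ : ∀ k, f (v k) = x k • v k := by
    intro k
    simpa [hf, Matrix.toLinAlgEquiv'_apply] using hveq k
  have heig : ∀ k, f.HasEigenvector (x k) (v k) := by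
    intro k
    rw [Module.End.hasEigenvector_iff, Module.End.mem_eigenspace_iff]
    exact ⟨happ k, hv0 k⟩
  have hli : LinearIndependent ℝ v := f.eigenvectors_linearIndependent' x hx v heig
  have hcard : Fintype.card (Fin n) = Module.finrank ℝ (Fin n → ℝ) := by simp
  let b : Module.Basis (Fin n) ℝ (Fin n → ℝ) := basisOfLinearIndependentOfCardEqFinrank hli hcard
  have hb : ∀ k, b k = v k := fun k =>
    congrFun (coe_basisOfLinearIndependentOfCardEqFinrank hli hcard) k
  have hmat : LinearMap.toMatrixAlgEquiv b f = Matrix.diagonal x := by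
    ext i j
    rw [LinearMap.toMatrixAlgEquiv_apply]
    have h1 : f (b j) = x j • b j := by rw [hb j, happ j]
    have h2 : b.repr (x j • b j) = x j • b.repr (b j) := by simp
    rw [h1, h2, b.repr_self]
    simp only [Finsupp.smul_apply, Finsupp.single_apply, Matrix.diagonal_apply]
    split_ifs with hji hij hij
    · subst hji; simp
    · exact absurd hji.symm hij
    · exact absurd hij.symm hji
    · simp
  -- trace M^l = trace of f^l
  have key : (M ^ l).trace = ((Matrix.diagonal x) ^ l).trace := by
    have e1 : (LinearMap.toMatrixAlgEquiv' (f ^ l)) = M ^ l := by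
      rw [map_pow, hf]; simp
    have e2 : (LinearMap.toMatrixAlgEquiv b (f ^ l)) = (Matrix.diagonal x) ^ l := by
      rw [map_pow, hmat]
    have t1 : (LinearMap.toMatrixAlgEquiv' (f ^ l)).trace = LinearMap.trace ℝ _ (f ^ l) := by
      rw [LinearMap.trace_eq_matrix_trace ℝ (Pi.basisFun ℝ (Fin n))]
      rfl
    have t2 : (LinearMap.toMatrixAlgEquiv b (f ^ l)).trace = LinearMap.trace ℝ _ (f ^ l) := by
      rw [LinearMap.trace_eq_matrix_trace ℝ b]
      rfl
    rw [← e1, ← e2, t1, t2]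
  rw [key, Matrix.diagonal_pow, Matrix.trace_diagonal]; simp [Pi.pow_apply]

/-- tridiagonal support -/
def Tri {n : ℕ} (A : Matrix (Fin n) (Fin n) ℝ) : Prop :=
  ∀ i j : Fin n, ((i:ℕ)+1 < (j:ℕ) ∨ (j:ℕ)+1 < (i:ℕ)) → A i j = 0

def Bnd {n : ℕ} (c : ℝ) (A : Matrix (Fin n) (Fin n) ℝ) : Prop :=
  ∀ i j, |A i j| ≤ c

lemma bnd_nonneg {n : ℕ} {c : ℝ} {A : Matrix (Fin n) (Fin n) ℝ} (h : Bnd c A)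
    (hn : 0 < n) : 0 ≤ c := le_trans (abs_nonneg _) (h ⟨0, hn⟩ ⟨0, hn⟩)

lemma colSum_le {n : ℕ} {K : ℝ} {B : Matrix (Fin n) (Fin n) ℝ}
    (hB : Tri B) (hBb : Bnd K B) (hK : 0 ≤ K) (j : Fin n) :
    ∑ i, |B i j| ≤ 3 * K := by
  classical
  have hsub : ∀ i : Fin n, i ∈ Finset.univ.filter
      (fun i : Fin n => ¬(((i:ℕ)+1 < (j:ℕ)) ∨ ((j:ℕ)+1 < (i:ℕ)))) → (i:ℕ) ∈ Finset.Icc ((j:ℕ)-1) ((j:ℕ)+1) := by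
    intro i hi
    simp only [Finset.mem_filter, Finset.mem_univ, true_and] at hi
    simp only [Finset.mem_Icc]
    omega
  calc ∑ i, |B i j|
      = ∑ i ∈ Finset.univ.filter
        (fun i : Fin n => ¬(((i:ℕ)+1 < (j:ℕ)) ∨ ((j:ℕ)+1 < (i:ℕ)))), |B i j| := by
        rw [eq_comm]
        apply Finset.sum_filter_of_ne
        intro i _ hne
        by_contra hcond
        exact hne (by rw [hB i j (by tauto), abs_zero])
    _ ≤ ∑ _i ∈ Finset.univ.filter
        (fun i : Fin n => ¬(((i:ℕ)+1 < (j:ℕ)) ∨ ((j:ℕ)+1 < (i:ℕ)))), K :=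
        Finset.sum_le_sum (fun i _ => hBb i j)
    _ = ((Finset.univ.filter
        (fun i : Fin n => ¬(((i:ℕ)+1 < (j:ℕ)) ∨ ((j:ℕ)+1 < (i:ℕ))))).card : ℝ) * K := by
        rw [Finset.sum_const, nsmul_eq_mul]
    _ ≤ 3 * K := by
      apply mul_le_mul_of_nonneg_right _ hK
      have hcard : (Finset.univ.filter
          (fun i : Fin n => ¬(((i:ℕ)+1 < (j:ℕ)) ∨ ((j:ℕ)+1 < (i:ℕ))))).card
          ≤ (Finset.Icc ((j:ℕ)-1) ((j:ℕ)+1)).card :=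
        Finset.card_le_card_of_injOn (fun i => (i:ℕ)) hsub (fun a _ b _ h => Fin.ext h)
      have : (Finset.Icc ((j:ℕ)-1) ((j:ℕ)+1)).card ≤ 3 := by
        rw [Nat.card_Icc]; omega
      exact_mod_cast le_trans hcard this

lemma mulBnd {n : ℕ} {c K : ℝ} {A B : Matrix (Fin n) (Fin n) ℝ}
    (hA : Bnd c A) (hB : Tri B) (hBb : Bnd K B) (hc : 0 ≤ c) (hK : 0 ≤ K) :
    Bnd (3 * K * c) (A * B) := by
  intro i j
  rw [Matrix.mul_apply]
  calc |∑ r, A i r * B r j| ≤ ∑ r, |A i r * B r j| := Finset.abs_sum_le_sum_abs _ _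
    _ ≤ ∑ r, c * |B r j| := by
        apply Finset.sum_le_sum; intro r _
        rw [abs_mul]
        exact mul_le_mul_of_nonneg_right (hA i r) (abs_nonneg _)
    _ = c * ∑ r, |B r j| := by rw [Finset.mul_sum]
    _ ≤ c * (3 * K) := mul_le_mul_of_nonneg_left (colSum_le hB hBb hK j) hc
    _ = 3 * K * c := by ring

lemma bnd_one {n : ℕ} : Bnd 1 (1 : Matrix (Fin n) (Fin n) ℝ) := by
  intro i j
  rw [Matrix.one_apply]
  split <;> simp

lemma mulPowBnd {n : ℕ} {c K : ℝ} {A B : Matrix (Fin n) (Fin n) ℝ}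
    (hA : Bnd c A) (hB : Tri B) (hBb : Bnd K B) (hc : 0 ≤ c) (hK : 0 ≤ K) :
    ∀ m : ℕ, Bnd ((3*K)^m * c) (A * B ^ m) := by
  intro m
  induction m with
  | zero => simpa using hA
  | succ m ih =>
      have := mulBnd ih hB hBb (by positivity) hK
      have heq : A * B ^ (m+1) = (A * B ^ m) * B := by rw [pow_succ, mul_assoc]
      rw [heq]
      convert this using 1
      ring

lemma powBnd {n : ℕ} {K : ℝ} {B : Matrix (Fin n) (Fin n) ℝ}
    (hB : Tri B) (hBb : Bnd K B) (hK : 0 ≤ K) (m : ℕ) :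
    Bnd ((3*K)^m) (B ^ m) := by
  have := mulPowBnd bnd_one hB hBb zero_le_one hK m
  simpa using this

lemma pow_sub_eq {n : ℕ} (T S : Matrix (Fin n) (Fin n) ℝ) :
    ∀ l, T ^ l - S ^ l = ∑ k ∈ Finset.range l, T ^ k * (T - S) * S ^ (l - 1 - k)
  | 0 => by simp
  | (l+1) => by
      have ih := pow_sub_eq T S l
      rw [Finset.sum_range_succ']
      have h0 : T ^ 0 * (T - S) * S ^ (l + 1 - 1 - 0) = (T - S) * S ^ l := by
        simp
      rw [h0]
      have hterm : ∀ k, T ^ (k+1) * (T - S) * S ^ (l + 1 - 1 - (k+1))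
          = T * (T ^ k * (T - S) * S ^ (l - 1 - k)) := by
        intro k
        have : l + 1 - 1 - (k+1) = l - 1 - k := by omega
        rw [this, pow_succ']
        noncomm_ring
      simp only [hterm]
      rw [← Finset.mul_sum, ← ih]
      have : T ^ (l+1) = T * T ^ l := pow_succ' T l
      rw [this, pow_succ']
      noncomm_ring

lemma trace_mul_bound {n : ℕ} (B X : Matrix (Fin n) (Fin n) ℝ) {K : ℝ}
    (hX : Bnd K X) : |(B * X).trace| ≤ K * ∑ i, ∑ j, |B i j| := by
  rw [Matrix.trace]
  calc |∑ i, (B * X) i i| ≤ ∑ i, |(B * X) i i| := Finset.abs_sum_le_sum_abs _ _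
    _ ≤ ∑ i, ∑ j, |B i j| * K := by
        apply Finset.sum_le_sum; intro i _
        rw [Matrix.mul_apply]
        calc |∑ j, B i j * X j i| ≤ ∑ j, |B i j * X j i| := Finset.abs_sum_le_sum_abs _ _
          _ ≤ ∑ j, |B i j| * K := by
              apply Finset.sum_le_sum; intro r _
              rw [abs_mul]
              exact mul_le_mul_of_nonneg_left (hX r i) (abs_nonneg _)
    _ = K * ∑ i, ∑ j, |B i j| := by
        rw [Finset.mul_sum]
        apply Finset.sum_congr rfl
        intro i _
        rw [Finset.mul_sum]
        apply Finset.sum_congr rfl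
        intro j _
        ring

lemma trace_pow_diff_le {n : ℕ} {K : ℝ} (hK : 1 ≤ K) {T S : Matrix (Fin n) (Fin n) ℝ}
    (hT : Tri T) (hTb : Bnd K T) (hS : Tri S) (hSb : Bnd K S) (l : ℕ) :
    |(T ^ l).trace - (S ^ l).trace|
      ≤ (l : ℝ) * (3*K)^l * ∑ i, ∑ j, |T i j - S i j| := by
  have hK0 : (0:ℝ) ≤ K := le_trans zero_le_one hK
  have h3K : (1:ℝ) ≤ 3 * K := by linarith
  have h3K0 : (0:ℝ) ≤ 3 * K := by linarith
  have hE0 : 0 ≤ ∑ i, ∑ j, |T i j - S i j| := by positivity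
  rw [← Matrix.trace_sub, pow_sub_eq, Matrix.trace_sum]
  calc |∑ k ∈ Finset.range l, (T ^ k * (T - S) * S ^ (l - 1 - k)).trace|
      ≤ ∑ k ∈ Finset.range l, |(T ^ k * (T - S) * S ^ (l - 1 - k)).trace| :=
        Finset.abs_sum_le_sum_abs _ _
    _ ≤ ∑ _k ∈ Finset.range l, (3*K)^l * ∑ i, ∑ j, |T i j - S i j| := by
        apply Finset.sum_le_sum
        intro k hk
        have hkl : k < l := Finset.mem_range.mp hk
        set m := l - 1 - k with hm
        have hcyc : ((T - S) * (S ^ m * T ^ k)).trace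
            = (T ^ k * (T - S) * S ^ m).trace := by
          rw [← mul_assoc, Matrix.trace_mul_cycle]
        rw [← hcyc]
        have hXb : Bnd ((3*K)^k * (3*K)^m) (S ^ m * T ^ k) :=
          mulPowBnd (powBnd hS hSb hK0 m) hT hTb (by positivity) hK0 k
        have := trace_mul_bound (T - S) (S ^ m * T ^ k) hXb
        refine le_trans this ?_
        apply mul_le_mul_of_nonneg_right _ (by positivity)
        have : (3*K)^k * (3*K)^m = (3*K)^(k+m) := by rw [pow_add]
        rw [this]
        apply pow_le_pow_right₀ h3K
        omega
    _ = (l : ℝ) * (3*K)^l * ∑ i, ∑ j, |T i j - S i j| := by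
        rw [Finset.sum_const, Finset.card_range, nsmul_eq_mul]
        ring

def triM (n : ℕ) (u v d : ℕ → ℝ) : Matrix (Fin n) (Fin n) ℝ :=
  Matrix.of fun i j =>
    if (i:ℕ)+1 = (j:ℕ) then u i
    else if (j:ℕ)+1 = (i:ℕ) then v j
    else if (i:ℕ) = (j:ℕ) then d i else 0

lemma triM_mulVec {n : ℕ} (u v d w : ℕ → ℝ) (hw0 : w 0 = 0) (hwn : w (n+1) = 0)
    (i : Fin n) :
    (triM n u v d).mulVec (fun j : Fin n => w ((j:ℕ)+1)) i
      = u i * w ((i:ℕ)+2) + d i * w ((i:ℕ)+1) + v ((i:ℕ)-1) * w (i:ℕ) := by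
  unfold Matrix.mulVec dotProduct triM
  simp only [Matrix.of_apply]
  have key : ∀ j : Fin n,
      (if (i:ℕ)+1 = (j:ℕ) then u i else if (j:ℕ)+1 = (i:ℕ) then v j
        else if (i:ℕ) = (j:ℕ) then d i else 0) * w ((j:ℕ)+1)
      = (if (i:ℕ)+1 = (j:ℕ) then u (i:ℕ) * w ((j:ℕ)+1) else 0)
        + (if (j:ℕ)+1 = (i:ℕ) then v (j:ℕ) * w ((j:ℕ)+1) else 0)
        + (if (i:ℕ) = (j:ℕ) then d (i:ℕ) * w ((j:ℕ)+1) else 0) := by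
    intro j
    split_ifs with h1 h2 h3 <;> try omega
    all_goals ring
  rw [Finset.sum_congr rfl (fun j _ => key j)]
  rw [Finset.sum_add_distrib, Finset.sum_add_distrib]
  have e1 : ∑ j : Fin n, (if (i:ℕ)+1 = (j:ℕ) then u (i:ℕ) * w ((j:ℕ)+1) else 0)
      = u (i:ℕ) * w ((i:ℕ)+2) := by
    rw [Fin.sum_univ_eq_sum_range (fun j => if (i:ℕ)+1 = j then u (i:ℕ) * w (j+1) else 0)]
    rw [Finset.sum_ite_eq]
    by_cases h : (i:ℕ)+1 ∈ Finset.range n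
    · rw [if_pos h]
    · rw [if_neg h]
      have : (i:ℕ)+1 = n := by
        have := i.isLt; simp [Finset.mem_range] at h; omega
      rw [show (i:ℕ)+2 = n+1 by omega, hwn, mul_zero]
  have e3 : ∑ j : Fin n, (if (i:ℕ) = (j:ℕ) then d (i:ℕ) * w ((j:ℕ)+1) else 0)
      = d (i:ℕ) * w ((i:ℕ)+1) := by
    rw [Fin.sum_univ_eq_sum_range (fun j => if (i:ℕ) = j then d (i:ℕ) * w (j+1) else 0)]
    rw [Finset.sum_ite_eq, if_pos (Finset.mem_range.mpr i.isLt)]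
  have e2 : ∑ j : Fin n, (if (j:ℕ)+1 = (i:ℕ) then v (j:ℕ) * w ((j:ℕ)+1) else 0)
      = v ((i:ℕ)-1) * w (i:ℕ) := by
    rw [Fin.sum_univ_eq_sum_range (fun j => if j+1 = (i:ℕ) then v j * w (j+1) else 0)]
    rcases Nat.eq_zero_or_pos (i:ℕ) with h0 | hpos
    · rw [h0]
      rw [Finset.sum_eq_zero (fun j _ => by simp), hw0, mul_zero]
    · obtain ⟨i', hii⟩ : ∃ i', (i:ℕ) = i' + 1 := ⟨(i:ℕ)-1, by omega⟩
      rw [hii]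
      have hcong : ∀ j ∈ Finset.range n,
          (if j+1 = i'+1 then v j * w (j+1) else 0) = (if i' = j then v j * w (j+1) else 0) := by
        intro j _
        by_cases h : i' = j
        · subst h; simp
        · rw [if_neg (by omega), if_neg h]
      rw [Finset.sum_congr rfl hcong, Finset.sum_ite_eq,
        if_pos (Finset.mem_range.mpr (by have := i.isLt; omega))]
      norm_num
  rw [e1, e2, e3]; ring

noncomputable def chebM (n : ℕ) : Matrix (Fin n) (Fin n) ℝ :=
  triM n (fun _ => 1/2) (fun _ => 1/2) (fun _ => 0)

open Real in
lemma cheb_trace (n l : ℕ) :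
    ((chebM n) ^ l).trace
      = ∑ k ∈ Finset.range n, (Real.cos (((k:ℝ)+1) * Real.pi / ((n:ℝ)+1)))^l := by
  have hn1 : (0:ℝ) < (n:ℝ) + 1 := by positivity
  set x : Fin n → ℝ := fun k => Real.cos ((((k:ℕ):ℝ)+1) * Real.pi / ((n:ℝ)+1)) with hx
  have hθmem : ∀ k : Fin n, (((k:ℕ):ℝ)+1) * Real.pi / ((n:ℝ)+1) ∈ Set.Icc 0 Real.pi := by
    intro k
    constructor
    · positivity
    · rw [div_le_iff₀ hn1]
      have h1 : ((k:ℕ):ℝ) + 1 ≤ (n:ℝ) + 1 := by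
        have := k.isLt
        have : ((k:ℕ):ℝ) ≤ (n:ℝ) := by exact_mod_cast Nat.le_of_lt_succ (Nat.lt_succ_of_lt this)
        linarith
      calc (((k:ℕ):ℝ)+1) * Real.pi ≤ ((n:ℝ)+1) * Real.pi := by
            apply mul_le_mul_of_nonneg_right h1 Real.pi_pos.le
        _ = Real.pi * ((n:ℝ)+1) := by ring
  have hθpos : ∀ k : Fin n, 0 < (((k:ℕ):ℝ)+1) * Real.pi / ((n:ℝ)+1) := by
    intro k; positivity
  have hθlt : ∀ k : Fin n, (((k:ℕ):ℝ)+1) * Real.pi / ((n:ℝ)+1) < Real.pi := by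
    intro k
    rw [div_lt_iff₀ hn1]
    have h1 : ((k:ℕ):ℝ) + 1 < (n:ℝ) + 1 := by
      have := k.isLt
      have : ((k:ℕ):ℝ) < (n:ℝ) := by exact_mod_cast this
      linarith
    calc (((k:ℕ):ℝ)+1) * Real.pi < ((n:ℝ)+1) * Real.pi :=
          mul_lt_mul_of_pos_right h1 Real.pi_pos
      _ = Real.pi * ((n:ℝ)+1) := by ring
  have hinj : Function.Injective x := by
    intro k k' hkk
    have h := Real.injOn_cos (hθmem k) (hθmem k') hkk
    have e : ((((k:ℕ):ℝ)+1) * Real.pi) = ((((k':ℕ):ℝ)+1) * Real.pi) := by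
      have h2 := congrArg (fun t => t * ((n:ℝ)+1)) h
      simp only [div_mul_cancel₀ _ hn1.ne'] at h2
      exact h2
    have : (((k:ℕ):ℝ)) = ((k':ℕ):ℝ) := by
      have := mul_right_cancel₀ Real.pi_ne_zero e
      linarith
    exact Fin.ext (by exact_mod_cast this)
  have hv : ∀ k : Fin n, ∃ v : Fin n → ℝ, v ≠ 0 ∧ (chebM n).mulVec v = x k • v := by
    intro k
    set α := (((k:ℕ):ℝ)+1) * Real.pi / ((n:ℝ)+1) with hα
    set w : ℕ → ℝ := fun m => Real.sin ((m:ℝ) * α) with hwdef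
    have hw0 : w 0 = 0 := by simp [hwdef]
    have hwn : w (n+1) = 0 := by
      simp only [hwdef]
      have : ((n+1:ℕ):ℝ) * α = ((k:ℕ)+1:ℕ) * Real.pi := by
        rw [hα]; push_cast; field_simp
      rw [this, Real.sin_nat_mul_pi]
    refine ⟨fun j : Fin n => w ((j:ℕ)+1), ?_, ?_⟩
    · intro hzero
      have h0 := congrFun hzero ⟨0, k.pos⟩
      simp only [Pi.zero_apply] at h0
      have hs : 0 < Real.sin α := Real.sin_pos_of_pos_of_lt_pi (hθpos k) (hθlt k)
      have hw1 : w 1 = Real.sin α := by simp [hwdef]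
      norm_num at h0
      rw [hw1] at h0
      exact hs.ne' h0
    · funext i
      rw [show (chebM n) = triM n (fun _ => 1/2) (fun _ => 1/2) (fun _ => 0) from rfl]
      rw [triM_mulVec _ _ _ w hw0 hwn i]
      simp only [Pi.smul_apply, smul_eq_mul]
      have hxk : x k = Real.cos α := rfl
      rw [hxk]
      simp only [hwdef]
      have c2 : (((i:ℕ)+2:ℕ):ℝ) * α = (((i:ℕ):ℝ)+1) * α + α := by push_cast; ring
      have c0 : (((i:ℕ):ℕ):ℝ) * α = (((i:ℕ):ℝ)+1) * α - α := by push_cast; ring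
      have c1 : (((i:ℕ)+1:ℕ):ℝ) * α = (((i:ℕ):ℝ)+1) * α := by push_cast; ring
      rw [c2, c0, c1, Real.sin_add, Real.sin_sub]
      ring
  rw [traceSpec (chebM n) x hinj hv l]
  rw [← Fin.sum_univ_eq_sum_range (fun k : ℕ => (Real.cos (((k:ℝ)+1) * Real.pi / ((n:ℝ)+1)))^l) n]

lemma riemann_limit (g : ℝ → ℝ) (hg : Continuous g) :
    Filter.Tendsto (fun n : ℕ => (1/(n:ℝ)) * ∑ k ∈ Finset.range n,
      g (((k:ℝ)+1) * Real.pi / ((n:ℝ)+1))) Filter.atTop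
      (nhds ((1/Real.pi) * ∫ θ in (0:ℝ)..Real.pi, g θ)) := by
  have hπ := Real.pi_pos
  rw [Metric.tendsto_atTop]
  intro ε hε
  have hUC := (isCompact_Icc (a := (0:ℝ)) (b := Real.pi)).uniformContinuousOn_of_continuous
    hg.continuousOn
  rw [Metric.uniformContinuousOn_iff] at hUC
  obtain ⟨δ, hδ, hδ2⟩ := hUC (ε/2) (by linarith)
  obtain ⟨N, hN⟩ := exists_nat_gt (Real.pi / δ)
  refine ⟨max N 1, fun n hn => ?_⟩
  have hn1 : 1 ≤ n := le_trans (le_max_right N 1) hn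
  have hnN : N ≤ n := le_trans (le_max_left N 1) hn
  have hnpos : (0:ℝ) < (n:ℝ) := by exact_mod_cast hn1
  have hπn : Real.pi / (n:ℝ) < δ := by
    rw [div_lt_iff₀ hnpos]
    have h1 : Real.pi / δ < (n:ℝ) := lt_of_lt_of_le hN (by exact_mod_cast hnN)
    rw [div_lt_iff₀ hδ] at h1
    linarith [mul_comm δ (n:ℝ)]
  set a : ℕ → ℝ := fun k => (k:ℝ) * Real.pi / (n:ℝ) with ha
  have hlen : ∀ k : ℕ, a (k+1) - a k = Real.pi / (n:ℝ) := by
    intro k; rw [ha]; push_cast; ring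
  have hsplit : ∫ θ in (0:ℝ)..Real.pi, g θ
      = ∑ k ∈ Finset.range n, ∫ θ in (a k)..(a (k+1)), g θ := by
    have h := intervalIntegral.sum_integral_adjacent_intervals
      (a := a) (n := n) (μ := MeasureTheory.volume)
      (fun k _ => hg.intervalIntegrable _ _)
    have ha0 : a 0 = 0 := by simp [ha]
    have han : a n = Real.pi := by rw [ha]; field_simp
    rw [ha0, han] at h
    exact h.symm
  set x : ℕ → ℝ := fun k => ((k:ℝ)+1) * Real.pi / ((n:ℝ)+1) with hxdef
  have hxmem : ∀ k ∈ Finset.range n, a k ≤ x k ∧ x k ≤ a (k+1) := by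
    intro k hk
    have hkn : (k:ℝ) ≤ (n:ℝ) := by
      have := Finset.mem_range.mp hk; exact_mod_cast this.le
    constructor
    · rw [ha, hxdef, div_le_div_iff₀ hnpos (by positivity)]
      nlinarith
    · rw [ha, hxdef, div_le_div_iff₀ (by positivity) hnpos]
      push_cast
      nlinarith
  have hconst : ∀ k ∈ Finset.range n,
      (1/(n:ℝ)) * g (x k) = (1/Real.pi) * ∫ _ in (a k)..(a (k+1)), g (x k) := by
    intro k hk
    rw [intervalIntegral.integral_const, hlen k, smul_eq_mul]
    field_simp
  have habs : ∀ k ∈ Finset.range n,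
      |∫ θ in (a k)..(a (k+1)), (g (x k) - g θ)| ≤ ε/2 * (Real.pi / (n:ℝ)) := by
    intro k hk
    have hka : (0:ℝ) ≤ a k := by rw [ha]; positivity
    have hkb : a (k+1) ≤ Real.pi := by
      rw [ha]
      have hkn : (k:ℝ)+1 ≤ (n:ℝ) := by exact_mod_cast Finset.mem_range.mp hk
      rw [div_le_iff₀ hnpos]; push_cast; nlinarith
    have hl := hlen k
    have hle : a k ≤ a (k+1) := by
      have : (0:ℝ) < Real.pi / (n:ℝ) := by positivity
      linarith
    have hx1 := (hxmem k hk).1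
    have hx2 := (hxmem k hk).2
    have hxk : x k ∈ Set.Icc 0 Real.pi := ⟨le_trans hka hx1, le_trans hx2 hkb⟩
    have hbound : ∀ θ ∈ Set.uIoc (a k) (a (k+1)), ‖g (x k) - g θ‖ ≤ ε/2 := by
      intro θ hθ
      rw [Set.uIoc_of_le hle] at hθ
      have hθmem : θ ∈ Set.Icc 0 Real.pi := ⟨le_trans hka hθ.1.le, le_trans hθ.2 hkb⟩
      have hdist : dist (x k) θ < δ := by
        rw [Real.dist_eq, abs_sub_lt_iff]
        constructor <;> [linarith [hθ.1, hθ.2]; linarith [hθ.1, hθ.2]]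
      have := hδ2 (x k) hxk θ hθmem hdist
      rw [Real.dist_eq] at this
      exact le_of_lt this
    have hres := intervalIntegral.norm_integral_le_of_norm_le_const hbound
    rw [Real.norm_eq_abs] at hres
    have : |a (k+1) - a k| = Real.pi / (n:ℝ) := by
      rw [hl]; exact abs_of_pos (by positivity)
    rwa [this] at hres
  have main : (1/(n:ℝ)) * ∑ k ∈ Finset.range n, g (x k)
      - (1/Real.pi) * ∫ θ in (0:ℝ)..Real.pi, g θ
      = (1/Real.pi) * ∑ k ∈ Finset.range n,
          ∫ θ in (a k)..(a (k+1)), (g (x k) - g θ) := by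
    have e1 : (1/(n:ℝ)) * ∑ k ∈ Finset.range n, g (x k)
        = ∑ k ∈ Finset.range n, (1/Real.pi) * ∫ _ in (a k)..(a (k+1)), g (x k) := by
      rw [Finset.mul_sum]
      exact Finset.sum_congr rfl hconst
    rw [e1, hsplit, Finset.mul_sum, ← Finset.sum_sub_distrib, Finset.mul_sum]
    apply Finset.sum_congr rfl
    intro k hk
    rw [← mul_sub]
    congr 1
    rw [intervalIntegral.integral_sub (intervalIntegrable_const) (hg.intervalIntegrable _ _)]
  rw [Real.dist_eq, main]
  have hfin : |(1/Real.pi) * ∑ k ∈ Finset.range n,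
      ∫ θ in (a k)..(a (k+1)), (g (x k) - g θ)| ≤ ε/2 := by
    rw [abs_mul, abs_of_nonneg (by positivity : (0:ℝ) ≤ 1/Real.pi)]
    calc (1/Real.pi) * |∑ k ∈ Finset.range n, ∫ θ in (a k)..(a (k+1)), (g (x k) - g θ)|
        ≤ (1/Real.pi) * ∑ k ∈ Finset.range n,
            |∫ θ in (a k)..(a (k+1)), (g (x k) - g θ)| := by
          apply mul_le_mul_of_nonneg_left (Finset.abs_sum_le_sum_abs _ _) (by positivity)
      _ ≤ (1/Real.pi) * ∑ _k ∈ Finset.range n, (ε/2 * (Real.pi / (n:ℝ))) := by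
          apply mul_le_mul_of_nonneg_left (Finset.sum_le_sum habs) (by positivity)
      _ = ε/2 := by
          rw [Finset.sum_const, Finset.card_range, nsmul_eq_mul]
          field_simp
  linarith [hfin]

lemma eigen_step (a b : ℕ → ℝ) (q : ℕ → Polynomial ℝ)
    (hrec : ∀ n : ℕ, 1 ≤ n →
      Polynomial.X * q n
        = Polynomial.C (a (n + 1)) * q (n + 1) + Polynomial.C (b n) * q n
          + Polynomial.C (a n) * q (n - 1))
    (ξ : ℕ → ℕ → ℝ)
    (hroot : ∀ n, ∀ i < n, (q n).eval (ξ n i) = 0)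
    (u v d : ℕ → ℝ)
    (hu : ∀ i, 1 ≤ i → u i = a (i+1))
    (hv : ∀ i, v i = a (i+1))
    (hd : ∀ i, 1 ≤ i → d i = b i)
    (hrow0 : ∀ x : ℝ, x * (q 0).eval x = u 0 * (q 1).eval x + d 0 * (q 0).eval x)
    (hB : ∀ x : ℝ, q 0 = 0 → (q 1).eval x = 0 → (u 0 = 0 ∧ d 0 = x))
    (hq0ne : q 0 ≠ 0 → (q 0).coeff 0 ≠ 0)
    (hq0c : ∀ x : ℝ, (q 0).eval x = (q 0).coeff 0)
    (n : ℕ) (k : Fin n) :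
    ∃ w : Fin n → ℝ, w ≠ 0 ∧ (triM n u v d).mulVec w = ξ n (k:ℕ) • w := by
  obtain ⟨xr, hxrdef⟩ : ∃ xr, ξ n (k:ℕ) = xr := ⟨_, rfl⟩
  rw [hxrdef]
  have hxr : (q n).eval xr = 0 := hxrdef ▸ hroot n k k.isLt
  by_cases hcaseB : q 0 = 0 ∧ (q 1).eval xr = 0
  · -- row 0 of (T - xr • 1) is zero
    obtain ⟨hu0, hd0⟩ := hB xr hcaseB.1 hcaseB.2
    have hdet : (triM n u v d - xr • 1).det = 0 := by
      apply Matrix.det_eq_zero_of_row_eq_zero ⟨0, k.pos⟩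
      rintro ⟨jv, hjv⟩
      have e1 : triM n u v d ⟨0, k.pos⟩ ⟨jv, hjv⟩
          = (if 0+1 = jv then u 0 else if jv+1 = 0 then v jv else if 0 = jv then d 0 else 0) := rfl
      simp only [Matrix.sub_apply, Matrix.smul_apply, Matrix.one_apply, e1, Fin.mk.injEq]
      split_ifs <;> first | omega | (exfalso; assumption) | simp [hu0, hd0] | (rw [hd0]; ring)
    obtain ⟨w, hw0, hweq⟩ := (Matrix.exists_mulVec_eq_zero_iff).mpr hdet
    refine ⟨w, hw0, ?_⟩
    have := hweq
    rw [Matrix.sub_mulVec, Matrix.smul_mulVec, Matrix.one_mulVec, sub_eq_zero] at this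
    exact this
  · -- explicit eigenvector from the polynomials
    set w : ℕ → ℝ := fun m => if m = 0 ∨ m = n+1 then 0 else (q (m-1)).eval xr with hwdef
    have hw0 : w 0 = 0 := by simp [hwdef]
    have hwn : w (n+1) = 0 := by simp [hwdef]
    have hwval : ∀ j, j < n → w (j+1) = (q j).eval xr := by
      intro j hj
      have hcond : ¬(j+1 = 0 ∨ j+1 = n+1) := by omega
      simp only [hwdef, if_neg hcond, Nat.add_sub_cancel]
    refine ⟨fun j : Fin n => w ((j:ℕ)+1), ?_, ?_⟩
    · -- nonzero
      intro hzero
      by_cases hq0 : q 0 = 0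
      · -- then q1(xr) ≠ 0 and n ≥ 2
        have hq1xr : (q 1).eval xr ≠ 0 := fun h => hcaseB ⟨hq0, h⟩
        have hn2 : 2 ≤ n := by
          by_contra h
          push_neg at h
          have hn1 : n = 1 := by have := k.pos; omega
          rw [hn1] at hxr
          exact hq1xr hxr
        have h1 := congrFun hzero ⟨1, by omega⟩
        simp only [Pi.zero_apply] at h1
        norm_num at h1
        have hv1 := hwval 1 (by omega)
        norm_num at hv1
        rw [hv1] at h1
        exact hq1xr h1
      · have h0 := congrFun hzero ⟨0, k.pos⟩
        simp only [Pi.zero_apply] at h0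
        norm_num at h0
        have hv0 := hwval 0 k.pos
        norm_num at hv0
        rw [hv0, hq0c xr] at h0
        exact hq0ne hq0 h0
    · funext i
      rw [triM_mulVec u v d w hw0 hwn i]
      simp only [Pi.smul_apply, smul_eq_mul]
      rw [hwval (i:ℕ) i.isLt]
      rcases Nat.eq_zero_or_pos (i:ℕ) with hi0 | hipos
      · -- row 0
        rw [hi0]
        by_cases hn1 : n = 1
        · -- w 2 = 0 and q1(xr) = 0
          have hq1xr : (q 1).eval xr = 0 := by
            have hxr1 := hxr
            rw [hn1] at hxr1
            exact hxr1
          have hw2 : w 2 = 0 := by simp [hwdef, hn1]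
          have := hrow0 xr
          rw [hq1xr] at this
          rw [hw2, hw0]
          simp only [Nat.zero_sub, Nat.sub_zero]
          linarith [this]
        · have hw2 : w 2 = (q 1).eval xr := by
            have : (1:ℕ) < n := by have := k.pos; omega
            exact hwval 1 this
          rw [hw2, hw0]
          have := hrow0 xr
          simp only [Nat.zero_sub]
          linarith [this]
      · -- rows ≥ 1
        have hilt : (i:ℕ) < n := i.isLt
        have heval := congrArg (Polynomial.eval xr) (hrec (i:ℕ) hipos)
        simp only [Polynomial.eval_mul, Polynomial.eval_add, Polynomial.eval_C,
          Polynomial.eval_X] at heval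
        rw [hu (i:ℕ) hipos, hd (i:ℕ) hipos, hv ((i:ℕ)-1)]
        have hvv : (i:ℕ)-1+1 = (i:ℕ) := by omega
        rw [hvv]
        have hwi : w (i:ℕ) = (q ((i:ℕ)-1)).eval xr := by
          have hcond : ¬((i:ℕ) = 0 ∨ (i:ℕ) = n+1) := by omega
          simp only [hwdef, if_neg hcond]
        rw [hwi]
        by_cases hlast : (i:ℕ)+1 = n
        · have hw2 : w ((i:ℕ)+2) = 0 := by
            have : (i:ℕ)+2 = n+1 := by omega
            rw [this]
            exact hwn
          have hqn : Polynomial.eval xr (q ((i:ℕ)+1)) = 0 := by rw [hlast]; exact hxr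
          rw [hqn] at heval
          rw [hw2]
          linarith [heval]
        · have hw2 : w ((i:ℕ)+2) = (q ((i:ℕ)+1)).eval xr := hwval ((i:ℕ)+1) (by omega)
          rw [hw2]
          linarith [heval]

lemma triM_tri {n : ℕ} (u v d : ℕ → ℝ) : Tri (triM n u v d) := by
  intro i j hij
  simp only [triM, Matrix.of_apply]
  rw [if_neg (by omega), if_neg (by omega), if_neg (by omega)]

lemma triM_bnd {n : ℕ} {K : ℝ} (u v d : ℕ → ℝ) (hK : 0 ≤ K)
    (hub : ∀ i, |u i| ≤ K) (hvb : ∀ i, |v i| ≤ K) (hdb : ∀ i, |d i| ≤ K) :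
    Bnd K (triM n u v d) := by
  intro i j
  simp only [triM, Matrix.of_apply]
  split_ifs
  · exact hub i
  · exact hvb j
  · exact hdb i
  · simpa using hK

lemma triM_sub {n : ℕ} (u v d u' v' d' : ℕ → ℝ) :
    triM n u v d - triM n u' v' d'
      = triM n (fun i => u i - u' i) (fun i => v i - v' i) (fun i => d i - d' i) := by
  ext i j
  simp only [Matrix.sub_apply, triM, Matrix.of_apply]
  split_ifs <;> ring

lemma triM_rowsum {n : ℕ} (u v d : ℕ → ℝ) (i : Fin n) :
    ∑ j, |triM n u v d i j|
      ≤ |u (i:ℕ)| + |d (i:ℕ)| + (if (i:ℕ) = 0 then 0 else |v ((i:ℕ)-1)|) := by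
  have key : ∀ j : Fin n, |triM n u v d i j|
      = (if (i:ℕ)+1 = (j:ℕ) then |u (i:ℕ)| else 0)
        + (if (j:ℕ)+1 = (i:ℕ) then |v (j:ℕ)| else 0)
        + (if (i:ℕ) = (j:ℕ) then |d (i:ℕ)| else 0) := by
    intro j
    simp only [triM, Matrix.of_apply]
    split_ifs <;> first | omega | simp
  rw [Finset.sum_congr rfl (fun j _ => key j), Finset.sum_add_distrib, Finset.sum_add_distrib]
  have e1 : ∑ j : Fin n, (if (i:ℕ)+1 = (j:ℕ) then |u (i:ℕ)| else 0) ≤ |u (i:ℕ)| := by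
    rw [Fin.sum_univ_eq_sum_range (fun j => if (i:ℕ)+1 = j then |u (i:ℕ)| else 0),
      Finset.sum_ite_eq]
    split_ifs <;> simp
  have e3 : ∑ j : Fin n, (if (i:ℕ) = (j:ℕ) then |d (i:ℕ)| else 0) ≤ |d (i:ℕ)| := by
    rw [Fin.sum_univ_eq_sum_range (fun j => if (i:ℕ) = j then |d (i:ℕ)| else 0),
      Finset.sum_ite_eq]
    split_ifs <;> simp
  have e2 : ∑ j : Fin n, (if (j:ℕ)+1 = (i:ℕ) then |v (j:ℕ)| else 0)
      ≤ (if (i:ℕ) = 0 then 0 else |v ((i:ℕ)-1)|) := by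
    rw [Fin.sum_univ_eq_sum_range (fun j => if j+1 = (i:ℕ) then |v j| else 0)]
    rcases Nat.eq_zero_or_pos (i:ℕ) with h0 | hpos
    · rw [h0, if_pos rfl]
      apply le_of_eq
      apply Finset.sum_eq_zero
      intro j _
      rw [if_neg (by omega)]
    · rw [if_neg (by omega)]
      obtain ⟨i', hii⟩ : ∃ i', (i:ℕ) = i' + 1 := ⟨(i:ℕ)-1, by omega⟩
      rw [hii]
      have hcong : ∀ j ∈ Finset.range n,
          (if j+1 = i'+1 then |v j| else 0) = (if i' = j then |v j| else 0) := by
        intro j _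
        by_cases h : i' = j
        · subst h; simp
        · rw [if_neg (by omega), if_neg h]
      rw [Finset.sum_congr rfl hcong, Finset.sum_ite_eq]
      have : i' + 1 - 1 = i' := by omega
      rw [this]
      split_ifs <;> simp
  linarith [e1, e2, e3]

open MeasureTheory Real

lemma cos_image_Ioo : Real.cos '' Set.Ioo 0 Real.pi = Set.Ioo (-1 : ℝ) 1 := by
  apply Set.eq_of_subset_of_subset
  · rintro y ⟨θ, hθ, rfl⟩
    constructor
    · have := Real.strictAntiOn_cos (Set.mem_Icc.mpr ⟨hθ.1.le, hθ.2.le⟩)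
        (Set.mem_Icc.mpr ⟨Real.pi_pos.le, le_refl _⟩) hθ.2
      simpa [Real.cos_pi] using this
    · have := Real.strictAntiOn_cos (Set.mem_Icc.mpr ⟨le_refl (0:ℝ), Real.pi_pos.le⟩)
        (Set.mem_Icc.mpr ⟨hθ.1.le, hθ.2.le⟩) hθ.1
      simpa [Real.cos_zero] using this
  · have h := intermediate_value_Ioo' (a := (0:ℝ)) (b := Real.pi) Real.pi_pos.le
      Real.continuous_cos.continuousOn
    simpa [Real.cos_zero, Real.cos_pi] using h

lemma subst_cos (f : ℝ → ℝ) :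
    ∫ x in Set.Ioo (-1 : ℝ) 1, f x / (Real.pi * Real.sqrt (1 - x ^ 2))
      = (1/Real.pi) * ∫ θ in (0:ℝ)..Real.pi, f (Real.cos θ) := by
  have hmeas : MeasurableSet (Set.Ioo (0:ℝ) Real.pi) := measurableSet_Ioo
  have hderiv : ∀ θ ∈ Set.Ioo (0:ℝ) Real.pi,
      HasDerivWithinAt Real.cos (-Real.sin θ) (Set.Ioo (0:ℝ) Real.pi) θ :=
    fun θ _ => (Real.hasDerivAt_cos θ).hasDerivWithinAt
  have hinj : Set.InjOn Real.cos (Set.Ioo (0:ℝ) Real.pi) :=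
    Real.injOn_cos.mono (fun θ hθ => Set.mem_Icc.mpr ⟨hθ.1.le, hθ.2.le⟩)
  have h := integral_image_eq_integral_abs_deriv_smul hmeas hderiv hinj
    (fun x => f x / (Real.pi * Real.sqrt (1 - x ^ 2)))
  rw [cos_image_Ioo] at h
  rw [h]
  have hcong : ∀ θ ∈ Set.Ioo (0:ℝ) Real.pi,
      |(-Real.sin θ)| • (f (Real.cos θ) / (Real.pi * Real.sqrt (1 - Real.cos θ ^ 2)))
        = f (Real.cos θ) / Real.pi := by
    intro θ hθ
    have hs : 0 < Real.sin θ := Real.sin_pos_of_pos_of_lt_pi hθ.1 hθ.2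
    have h1 : (1 : ℝ) - Real.cos θ ^ 2 = Real.sin θ ^ 2 := by
      have := Real.sin_sq_add_cos_sq θ; linarith
    rw [h1, Real.sqrt_sq hs.le, abs_neg, abs_of_pos hs, smul_eq_mul]
    field_simp
  rw [setIntegral_congr_fun hmeas hcong]
  rw [intervalIntegral.integral_of_le Real.pi_pos.le, ← integral_Ioc_eq_integral_Ioo]
  rw [MeasureTheory.integral_div]
  ring


lemma bounded_of_tendsto {a : ℕ → ℝ} {L : ℝ}
    (h : Filter.Tendsto a Filter.atTop (nhds L)) : ∃ K, ∀ i, |a i| ≤ K := by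
  have hev : ∀ᶠ i in Filter.atTop, |a i - L| < 1 := by
    have := Metric.tendsto_atTop.mp h 1 one_pos
    obtain ⟨N, hN⟩ := this
    exact Filter.eventually_atTop.mpr ⟨N, fun i hi => by
      have := hN i hi; rwa [Real.dist_eq] at this⟩
  obtain ⟨N, hN⟩ := Filter.eventually_atTop.mp hev
  set F := insert 0 (Finset.range N) with hF
  have hFne : F.Nonempty := ⟨0, Finset.mem_insert_self 0 _⟩
  refine ⟨max (F.sup' hFne (fun i => |a i|)) (|L| + 1), fun i => ?_⟩
  rcases Nat.lt_or_ge i N with hi | hi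
  · exact le_trans (Finset.le_sup' (fun i => |a i|)
      (Finset.mem_insert_of_mem (Finset.mem_range.mpr hi))) (le_max_left _ _)
  · have := hN i hi
    have : |a i| ≤ |L| + 1 := by
      have h2 := abs_sub_abs_le_abs_sub (a i) L
      linarith
    exact le_trans this (le_max_right _ _)


/-- If the recurrence coefficients of orthonormal polynomials on `[-1,1]` satisfy
`a_n → 1/2`, `b_n → 0`, then the normalized zero-counting measures converge weak-star to
the arcsine measure. -/
theorem stmt17 (a b : ℕ → ℝ) (ha : ∀ n, 0 < a n)
    (haL : Filter.Tendsto a Filter.atTop (nhds (1 / 2)))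
    (hbL : Filter.Tendsto b Filter.atTop (nhds 0))
    (q : ℕ → Polynomial ℝ)
    (hdeg : ∀ n, (q n).natDegree = n)
    (hrec : ∀ n : ℕ, 1 ≤ n →
      Polynomial.X * q n
        = Polynomial.C (a (n + 1)) * q (n + 1) + Polynomial.C (b n) * q n
          + Polynomial.C (a n) * q (n - 1))
    (ξ : ℕ → ℕ → ℝ)
    (hroot : ∀ n, ∀ i < n, (q n).eval (ξ n i) = 0)
    (hmem : ∀ n, ∀ i < n, ξ n i ∈ Set.Icc (-1 : ℝ) 1)
    (hinj : ∀ n, ∀ i < n, ∀ j < n, ξ n i = ξ n j → i = j) :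
    ∀ f : ℝ → ℝ, ContinuousOn f (Set.Icc (-1 : ℝ) 1) →
      Filter.Tendsto (fun n : ℕ => (1 / (n : ℝ)) * ∑ i ∈ Finset.range n, f (ξ n i))
        Filter.atTop
        (nhds (∫ x in Set.Ioo (-1 : ℝ) 1, f x / (Real.pi * Real.sqrt (1 - x ^ 2)))) := by
  classical
  have hπ := Real.pi_pos
  -- basic facts about q 0 and q 1
  set c0 := (q 0).coeff 0 with hc0def
  set d1 := (q 1).coeff 1 with hd1def
  set e1 := (q 1).coeff 0 with he1def
  have hq1ne : q 1 ≠ 0 := by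
    intro h
    have := hdeg 1
    rw [h] at this
    simp at this
  have hd1 : d1 ≠ 0 := by
    have h := Polynomial.leadingCoeff_ne_zero.mpr hq1ne
    rwa [Polynomial.leadingCoeff, hdeg 1] at h
  have hq0eval : ∀ x : ℝ, (q 0).eval x = c0 := by
    obtain ⟨c, hc⟩ := Polynomial.natDegree_eq_zero.mp (hdeg 0)
    intro x
    rw [← hc]
    simp [hc0def, ← hc]
  have hq0ne : q 0 ≠ 0 → c0 ≠ 0 := by
    intro h hc
    obtain ⟨c, hcc⟩ := Polynomial.natDegree_eq_zero.mp (hdeg 0)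
    apply h
    rw [← hcc]
    have : c = c0 := by rw [hc0def, ← hcc]; simp
    rw [this, hc]
    simp
  have hq1eval : ∀ x : ℝ, (q 1).eval x = d1 * x + e1 := by
    intro x
    rw [Polynomial.eval_eq_sum_range, hdeg 1]
    simp [Finset.sum_range_succ]
    ring
  -- the matrix entry sequences
  set u : ℕ → ℝ := fun i => if i = 0 then (if q 0 = 0 then 0 else c0 / d1) else a (i+1)
    with hudef
  set v : ℕ → ℝ := fun i => a (i+1) with hvdef
  set dd : ℕ → ℝ := fun i => if i = 0 then (if q 0 = 0 then ξ 1 0 else -e1 / d1) else b i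
    with hdddef
  have hu1 : ∀ i, 1 ≤ i → u i = a (i+1) := fun i hi => by
    simp only [hudef]; rw [if_neg (by omega)]
  have hd1' : ∀ i, 1 ≤ i → dd i = b i := fun i hi => by
    simp only [hdddef]; rw [if_neg (by omega)]
  have hrow0 : ∀ x : ℝ, x * (q 0).eval x = u 0 * (q 1).eval x + dd 0 * (q 0).eval x := by
    intro x
    by_cases h0 : q 0 = 0
    · simp [hudef, h0]
    · simp only [hudef, hdddef, if_pos rfl, if_neg h0, hq0eval, hq1eval]
      field_simp
      ring
  have hB : ∀ x : ℝ, q 0 = 0 → (q 1).eval x = 0 → u 0 = 0 ∧ dd 0 = x := by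
    intro x h0 h1
    constructor
    · simp [hudef, h0]
    · simp only [hdddef, if_pos rfl, if_pos h0]
      have hr := hroot 1 0 one_pos
      rw [hq1eval] at hr h1
      have : d1 * (ξ 1 0) = d1 * x := by linarith
      exact mul_left_cancel₀ hd1 this
  have heig := eigen_step a b q hrec ξ hroot u v dd hu1 (fun i => rfl) hd1' hrow0
    (fun x h0 h1 => hB x h0 h1) hq0ne hq0eval
  -- uniform bound K on all entries
  obtain ⟨Ka, hKa⟩ := bounded_of_tendsto haL
  obtain ⟨Kb, hKb⟩ := bounded_of_tendsto hbL
  set K : ℝ := max 1 (max (max Ka Kb) (max (|u 0|) (|dd 0|))) with hKdef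
  have hK1 : 1 ≤ K := le_max_left _ _
  have hK0 : 0 ≤ K := le_trans zero_le_one hK1
  have hub : ∀ i, |u i| ≤ K := by
    intro i
    rcases Nat.eq_zero_or_pos i with rfl | hi
    · exact le_trans (le_max_left _ _) (le_trans (le_max_right _ _) (le_max_right _ _))
    · rw [hu1 i hi]
      exact le_trans (hKa (i+1)) (le_trans (le_max_left _ _)
        (le_trans (le_max_left _ _) (le_max_right _ _)))
  have hvb : ∀ i, |v i| ≤ K := by
    intro i
    exact le_trans (hKa (i+1)) (le_trans (le_max_left _ _)
      (le_trans (le_max_left _ _) (le_max_right _ _)))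
  have hdb : ∀ i, |dd i| ≤ K := by
    intro i
    rcases Nat.eq_zero_or_pos i with rfl | hi
    · exact le_trans (le_max_right _ _) (le_trans (le_max_right _ _) (le_max_right _ _))
    · rw [hd1' i hi]
      exact le_trans (hKb i) (le_trans (le_max_right _ _)
        (le_trans (le_max_left _ _) (le_max_right _ _)))
  have hTb : ∀ n, Bnd K (triM n u v dd) := fun n => triM_bnd u v dd hK0 hub hvb hdb
  have hSb : ∀ n, Bnd K (chebM n) := fun n => triM_bnd _ _ _ hK0
    (fun _ => by rw [abs_of_pos (by norm_num : (0:ℝ) < 1/2)]; linarith)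
    (fun _ => by rw [abs_of_pos (by norm_num : (0:ℝ) < 1/2)]; linarith)
    (fun _ => by simpa using hK0)
  -- the entry-difference sequence and its Cesàro mean
  set hseq : ℕ → ℝ := fun i => |u i - 1/2| + |dd i|
      + (if i = 0 then 0 else |v (i-1) - 1/2|) with hhdef
  have hseq0 : ∀ i, 0 ≤ hseq i := by
    intro i
    simp only [hhdef]
    have : (0:ℝ) ≤ if i = 0 then 0 else |v (i-1) - 1/2| := by positivity
    positivity
  have hseqL : Filter.Tendsto hseq Filter.atTop (nhds 0) := by
    have h1 : Filter.Tendsto (fun i => |u i - 1/2|) Filter.atTop (nhds 0) := by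
      have hbase : Filter.Tendsto (fun i : ℕ => |a (i+1) - 1/2|) Filter.atTop (nhds 0) := by
        have := ((haL.comp (Filter.tendsto_add_atTop_nat 1)).sub_const (1/2)).abs
        simpa using this
      apply hbase.congr'
      filter_upwards [Filter.eventually_ge_atTop 1] with i hi
      rw [hu1 i hi]
    have h2 : Filter.Tendsto (fun i => |dd i|) Filter.atTop (nhds 0) := by
      have hbase : Filter.Tendsto (fun i : ℕ => |b i|) Filter.atTop (nhds 0) := by
        simpa using hbL.abs
      apply hbase.congr'
      filter_upwards [Filter.eventually_ge_atTop 1] with i hi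
      rw [hd1' i hi]
    have h3 : Filter.Tendsto (fun i : ℕ => if i = 0 then (0:ℝ) else |v (i-1) - 1/2|)
        Filter.atTop (nhds 0) := by
      have hbase : Filter.Tendsto (fun i : ℕ => |a i - 1/2|) Filter.atTop (nhds 0) := by
        have := (haL.sub_const (1/2)).abs
        simpa using this
      apply hbase.congr'
      filter_upwards [Filter.eventually_ge_atTop 1] with i hi
      have hne : ¬ i = 0 := by omega
      rw [if_neg hne]
      simp only [hvdef]
      have hei : i - 1 + 1 = i := by omega
      rw [hei]
    have := (h1.add h2).add h3
    simpa [hhdef] using this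
  have hces : Filter.Tendsto (fun n : ℕ => ((n:ℝ))⁻¹ * ∑ i ∈ Finset.range n, hseq i)
      Filter.atTop (nhds 0) := hseqL.cesaro
  -- monomial limits
  have hmono : ∀ l : ℕ, Filter.Tendsto
      (fun n : ℕ => (1/(n:ℝ)) * ∑ i ∈ Finset.range n, (ξ n i)^l) Filter.atTop
      (nhds ((1/Real.pi) * ∫ θ in (0:ℝ)..Real.pi, (Real.cos θ)^l)) := by
    intro l
    have htr : ∀ n : ℕ, ∑ i ∈ Finset.range n, (ξ n i)^l = ((triM n u v dd)^l).trace := by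
      intro n
      rw [traceSpec (triM n u v dd) (fun k : Fin n => ξ n (k:ℕ))
        (fun k k' h => Fin.ext (hinj n k k.isLt k' k'.isLt h)) (fun k => heig n k) l]
      exact (Fin.sum_univ_eq_sum_range (fun i => ξ n i ^ l) n).symm
    have hdiff : ∀ n : ℕ, |((triM n u v dd)^l).trace - ((chebM n)^l).trace|
        ≤ (l:ℝ) * (3*K)^l * ∑ i ∈ Finset.range n, hseq i := by
      intro n
      refine le_trans (trace_pow_diff_le hK1 (triM_tri u v dd) (hTb n)
        (triM_tri _ _ _) (hSb n) l) ?_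
      apply mul_le_mul_of_nonneg_left _ (by positivity)
      have hentry : ∀ i : Fin n, ∑ j, |triM n u v dd i j - chebM n i j| ≤ hseq (i:ℕ) := by
        intro i
        have hsub : ∀ j : Fin n, triM n u v dd i j - chebM n i j
            = triM n (fun i => u i - 1/2) (fun i => v i - 1/2) (fun i => dd i - 0) i j := by
          intro j
          have := congrFun (congrFun (triM_sub u v dd
            (fun _ => 1/2) (fun _ => 1/2) (fun _ => 0) (n := n)) i) j
          simpa [chebM] using this
        calc ∑ j, |triM n u v dd i j - chebM n i j|
            = ∑ j, |triM n (fun i => u i - 1/2) (fun i => v i - 1/2)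
                (fun i => dd i - 0) i j| := by
              apply Finset.sum_congr rfl
              intro j _
              rw [hsub j]
          _ ≤ |u (i:ℕ) - 1/2| + |dd (i:ℕ) - 0|
              + (if (i:ℕ) = 0 then 0 else |v ((i:ℕ)-1) - 1/2|) :=
              triM_rowsum _ _ _ i
          _ = hseq (i:ℕ) := by simp [hhdef]
      calc ∑ i, ∑ j, |triM n u v dd i j - chebM n i j|
          ≤ ∑ i : Fin n, hseq (i:ℕ) := Finset.sum_le_sum (fun i _ => hentry i)
        _ = ∑ i ∈ Finset.range n, hseq i := Fin.sum_univ_eq_sum_range _ n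
    have hdiff2 : Filter.Tendsto (fun n : ℕ => (1/(n:ℝ)) *
        (((triM n u v dd)^l).trace - ((chebM n)^l).trace)) Filter.atTop (nhds 0) := by
      apply squeeze_zero_norm (a := fun n : ℕ =>
        (l:ℝ) * (3*K)^l * (((n:ℝ))⁻¹ * ∑ i ∈ Finset.range n, hseq i))
      · intro n
        rw [Real.norm_eq_abs, abs_mul, abs_of_nonneg (by positivity : (0:ℝ) ≤ 1/(n:ℝ))]
        calc (1/(n:ℝ)) * |((triM n u v dd)^l).trace - ((chebM n)^l).trace|
            ≤ (1/(n:ℝ)) * ((l:ℝ) * (3*K)^l * ∑ i ∈ Finset.range n, hseq i) :=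
              mul_le_mul_of_nonneg_left (hdiff n) (by positivity)
          _ = (l:ℝ) * (3*K)^l * (((n:ℝ))⁻¹ * ∑ i ∈ Finset.range n, hseq i) := by
              rw [one_div]; ring
      · have := hces.const_mul ((l:ℝ) * (3*K)^l)
        simpa using this
    have hcheb2 : Filter.Tendsto (fun n : ℕ => (1/(n:ℝ)) * ((chebM n)^l).trace)
        Filter.atTop (nhds ((1/Real.pi) * ∫ θ in (0:ℝ)..Real.pi, (Real.cos θ)^l)) := by
      have hR := riemann_limit (fun θ => (Real.cos θ)^l) (Real.continuous_cos.pow l)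
      apply hR.congr
      intro n
      rw [cheb_trace n l]
    have := hdiff2.add hcheb2
    rw [zero_add] at this
    apply this.congr
    intro n
    rw [htr n]
    ring
  -- polynomial limits
  have hpoly : ∀ p : Polynomial ℝ, Filter.Tendsto
      (fun n : ℕ => (1/(n:ℝ)) * ∑ i ∈ Finset.range n, p.eval (ξ n i)) Filter.atTop
      (nhds ((1/Real.pi) * ∫ θ in (0:ℝ)..Real.pi, p.eval (Real.cos θ))) := by
    intro p
    set D := p.natDegree + 1 with hD
    have hev : ∀ y : ℝ, p.eval y = ∑ l ∈ Finset.range D, p.coeff l * y^l :=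
      fun y => Polynomial.eval_eq_sum_range y
    have e1 : ∀ n : ℕ, (1/(n:ℝ)) * ∑ i ∈ Finset.range n, p.eval (ξ n i)
        = ∑ l ∈ Finset.range D, p.coeff l * ((1/(n:ℝ)) * ∑ i ∈ Finset.range n, (ξ n i)^l) := by
      intro n
      rw [Finset.sum_congr rfl (fun i _ => hev (ξ n i)), Finset.sum_comm, Finset.mul_sum]
      apply Finset.sum_congr rfl
      intro l _
      rw [← Finset.mul_sum, Finset.mul_sum]
      rw [← Finset.mul_sum]
      ring
    have e2 : (1/Real.pi) * ∫ θ in (0:ℝ)..Real.pi, p.eval (Real.cos θ)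
        = ∑ l ∈ Finset.range D, p.coeff l
            * ((1/Real.pi) * ∫ θ in (0:ℝ)..Real.pi, (Real.cos θ)^l) := by
      have hI : ∫ θ in (0:ℝ)..Real.pi, p.eval (Real.cos θ)
          = ∑ l ∈ Finset.range D, ∫ θ in (0:ℝ)..Real.pi, p.coeff l * (Real.cos θ)^l := by
        rw [← intervalIntegral.integral_finset_sum]
        · apply intervalIntegral.integral_congr
          intro θ _
          exact hev (Real.cos θ)
        · intro l _
          exact (continuous_const.mul (Real.continuous_cos.pow l)).intervalIntegrable _ _
      rw [hI, Finset.mul_sum]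
      apply Finset.sum_congr rfl
      intro l _
      rw [intervalIntegral.integral_const_mul]
      ring
    rw [e2]
    apply Filter.Tendsto.congr (fun n => (e1 n).symm)
    exact tendsto_finset_sum _ (fun l _ => (hmono l).const_mul (p.coeff l))
  -- final approximation argument
  intro f hf
  rw [subst_cos f]
  rw [Metric.tendsto_atTop]
  intro ε hε
  obtain ⟨p, hp⟩ := exists_polynomial_near_of_continuousOn (-1) 1 f hf (ε/4) (by linarith)
  have hpL := hpoly p
  rw [Metric.tendsto_atTop] at hpL
  obtain ⟨N0, hN0⟩ := hpL (ε/4) (by linarith)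
  refine ⟨max N0 1, fun n hn => ?_⟩
  have hn1 : 1 ≤ n := le_trans (le_max_right N0 1) hn
  have hnN0 : N0 ≤ n := le_trans (le_max_left N0 1) hn
  have hnpos : (0:ℝ) < (n:ℝ) := by exact_mod_cast hn1
  set Snf := (1/(n:ℝ)) * ∑ i ∈ Finset.range n, f (ξ n i) with hSnf
  set Snp := (1/(n:ℝ)) * ∑ i ∈ Finset.range n, p.eval (ξ n i) with hSnp
  set Lf := (1/Real.pi) * ∫ θ in (0:ℝ)..Real.pi, f (Real.cos θ) with hLf
  set Lp := (1/Real.pi) * ∫ θ in (0:ℝ)..Real.pi, p.eval (Real.cos θ) with hLp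
  have hT1 : |Snf - Snp| ≤ ε/4 := by
    rw [hSnf, hSnp, ← mul_sub, ← Finset.sum_sub_distrib, abs_mul,
      abs_of_nonneg (by positivity : (0:ℝ) ≤ 1/(n:ℝ))]
    calc (1/(n:ℝ)) * |∑ i ∈ Finset.range n, (f (ξ n i) - p.eval (ξ n i))|
        ≤ (1/(n:ℝ)) * ∑ i ∈ Finset.range n, |f (ξ n i) - p.eval (ξ n i)| :=
          mul_le_mul_of_nonneg_left (Finset.abs_sum_le_sum_abs _ _) (by positivity)
      _ ≤ (1/(n:ℝ)) * ∑ _i ∈ Finset.range n, (ε/4) := by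
          apply mul_le_mul_of_nonneg_left _ (by positivity)
          apply Finset.sum_le_sum
          intro i hi
          rw [abs_sub_comm]
          exact (hp (ξ n i) (hmem n i (Finset.mem_range.mp hi))).le
      _ = ε/4 := by
          rw [Finset.sum_const, Finset.card_range, nsmul_eq_mul]
          field_simp
  have hcosmem : ∀ θ : ℝ, Real.cos θ ∈ Set.Icc (-1:ℝ) 1 :=
    fun θ => ⟨Real.neg_one_le_cos θ, Real.cos_le_one θ⟩
  have hT3 : |Lp - Lf| ≤ ε/4 := by
    rw [hLp, hLf, ← mul_sub]
    have hintp : IntervalIntegrable (fun θ => p.eval (Real.cos θ))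
        MeasureTheory.volume 0 Real.pi :=
      ((p.continuous_aeval).comp Real.continuous_cos).intervalIntegrable _ _
    have hintf : IntervalIntegrable (fun θ => f (Real.cos θ))
        MeasureTheory.volume 0 Real.pi := by
      apply ContinuousOn.intervalIntegrable
      apply hf.comp Real.continuous_cos.continuousOn
      intro θ _
      exact hcosmem θ
    rw [← intervalIntegral.integral_sub hintp hintf]
    rw [abs_mul, abs_of_nonneg (by positivity : (0:ℝ) ≤ 1/Real.pi)]
    have hbd := intervalIntegral.norm_integral_le_of_norm_le_const
      (C := ε/4) (f := fun θ => p.eval (Real.cos θ) - f (Real.cos θ))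
      (a := 0) (b := Real.pi) ?_
    · rw [Real.norm_eq_abs] at hbd
      calc (1/Real.pi) * |∫ θ in (0:ℝ)..Real.pi, (p.eval (Real.cos θ) - f (Real.cos θ))|
          ≤ (1/Real.pi) * (ε/4 * |Real.pi - 0|) :=
            mul_le_mul_of_nonneg_left hbd (by positivity)
        _ = ε/4 := by
            rw [sub_zero, abs_of_pos hπ]
            field_simp
    · intro θ _
      rw [Real.norm_eq_abs]
      exact (hp (Real.cos θ) (hcosmem θ)).le
  have hT2 : dist Snp Lp < ε/4 := hN0 n hnN0
  rw [Real.dist_eq] at hT2 ⊢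
  have htri : |Snf - Lf| ≤ |Snf - Snp| + |Snp - Lp| + |Lp - Lf| := by
    have h1 := abs_sub_le Snf Snp Lf
    have h2 := abs_sub_le Snp Lp Lf
    linarith
  linarith
end

section
/- Trace-moment form of zero distribution: let J_n be the n×n tridiagonal symmetric matrix with diagonal entries b_0,…,b_{n−1} and off-diagonal entries a_1,…,a_{n−1}, where a_n → 1/2 and b_n → 0. Then for every fixed l ∈ ℕ, (1/n)·Tr(J_n^l) → (1/π)∫_{−1}^1 x^l /√(1−x²) dx = 2^{−l}·C(l, l/2) for even l (and 0 for odd l). -/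
open scoped BigOperators

/-- The truncated Jacobi matrix with diagonal `b_0,…,b_{n−1}` and off-diagonal
`a_1,…,a_{n−1}`. -/
noncomputable def jacobiMat (a b : ℕ → ℝ) (n : ℕ) : Matrix (Fin n) (Fin n) ℝ :=
  fun i j =>
    if (i : ℕ) = (j : ℕ) then b i
    else if (i : ℕ) + 1 = (j : ℕ) ∨ (j : ℕ) + 1 = (i : ℕ) then a (max (i : ℕ) (j : ℕ))
    else 0

noncomputable def Kk (a b : ℕ → ℝ) (i j : ℕ) : ℝ :=
  if i = j then b i else if i + 1 = j ∨ j + 1 = i then a (max i j) else 0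

noncomputable def Ff (a b : ℕ → ℝ) (n : ℕ) : ℕ → ℕ → ℕ → ℝ
  | 0, i, j => if i = j then 1 else 0
  | l + 1, i, j => ∑ m ∈ Finset.range n, Kk a b i m * Ff a b n l m j

lemma jacobiMat_apply (a b : ℕ → ℝ) (n : ℕ) (i j : Fin n) :
    jacobiMat a b n i j = Kk a b i j := rfl

lemma pow_jacobi_apply (a b : ℕ → ℝ) (n : ℕ) (l : ℕ) (i j : Fin n) :
    (jacobiMat a b n ^ l) i j = Ff a b n l i j := by
  induction l generalizing i j with
  | zero =>
      simp [pow_zero, Matrix.one_apply, Ff, Fin.ext_iff]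
  | succ l ih =>
      rw [pow_succ', Matrix.mul_apply]
      show _ = ∑ m ∈ Finset.range n, Kk a b i m * Ff a b n l m j
      rw [← Fin.sum_univ_eq_sum_range (fun m => Kk a b i m * Ff a b n l m j) n]
      exact Finset.sum_congr rfl fun m _ => by rw [jacobiMat_apply, ih]

lemma Kk_eq_zero {a b : ℕ → ℝ} {i m : ℕ} (h : i + 1 < m ∨ m + 1 < i) : Kk a b i m = 0 := by
  unfold Kk
  split_ifs with h1 h2
  · omega
  · omega
  · rfl

lemma Kk_abs_le {a b : ℕ → ℝ} {C : ℝ} (hC0 : 0 ≤ C) (hC : ∀ i, |a i| ≤ C ∧ |b i| ≤ C)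
    (i m : ℕ) : |Kk a b i m| ≤ C := by
  unfold Kk
  split_ifs
  · exact (hC i).2
  · exact (hC _).1
  · simpa using hC0

lemma sum_range_Kk (a b : ℕ → ℝ) {i n : ℕ} (h1 : 1 ≤ i) (h2 : i + 1 < n) (x : ℕ → ℝ) :
    ∑ m ∈ Finset.range n, Kk a b i m * x m
      = a i * x (i - 1) + b i * x i + a (i + 1) * x (i + 1) := by
  have hsub : ({i - 1, i, i + 1} : Finset ℕ) ⊆ Finset.range n := by
    intro m hm
    simp only [Finset.mem_insert, Finset.mem_singleton] at hm
    simp only [Finset.mem_range]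
    omega
  rw [← Finset.sum_subset hsub (fun m _ hm => by
    simp only [Finset.mem_insert, Finset.mem_singleton] at hm
    rw [Kk_eq_zero (by omega), zero_mul])]
  rw [show ({i - 1, i, i + 1} : Finset ℕ) = insert (i-1) (insert i {i+1}) from rfl]
  rw [Finset.sum_insert (by simp; omega), Finset.sum_insert (by simp),
    Finset.sum_singleton]
  have e1 : Kk a b i (i - 1) = a i := by
    unfold Kk
    rw [if_neg (by omega), if_pos (by omega), max_eq_left (by omega)]
  have e2 : Kk a b i i = b i := by unfold Kk; rw [if_pos rfl]
  have e3 : Kk a b i (i + 1) = a (i + 1) := by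
    unfold Kk
    rw [if_neg (by omega), if_pos (by omega), max_eq_right (by omega)]
  rw [e1, e2, e3]; ring

lemma Ff_loc (a b : ℕ → ℝ) :
    ∀ (l i j n n' : ℕ), i + l < n → i + l < n' → Ff a b n l i j = Ff a b n' l i j := by
  intro l
  induction l with
  | zero => intro i j n n' _ _; rfl
  | succ l ih =>
      intro i j n n' h h'
      have red : ∀ N : ℕ, i + (l + 1) < N →
          Ff a b N (l + 1) i j = ∑ m ∈ Finset.range (i + 2), Kk a b i m * Ff a b N l m j := by
        intro N hN
        show ∑ m ∈ Finset.range N, Kk a b i m * Ff a b N l m j = _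
        refine (Finset.sum_subset (by intro m hm; simp only [Finset.mem_range] at *; omega)
          (fun m hm hnm => ?_)).symm
        simp only [Finset.mem_range] at hm hnm
        rw [Kk_eq_zero (by omega), zero_mul]
      rw [red n h, red n' h']
      refine Finset.sum_congr rfl fun m hm => ?_
      simp only [Finset.mem_range] at hm
      rw [ih m j n n' (by omega) (by omega)]

lemma sum_abs_Kk (a b : ℕ → ℝ) {C : ℝ} (hC0 : 0 ≤ C) (hC : ∀ i, |a i| ≤ C ∧ |b i| ≤ C)
    (i n : ℕ) : ∑ m ∈ Finset.range n, |Kk a b i m| ≤ 3 * C := by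
  have step : ∀ m ∈ Finset.range n,
      |Kk a b i m| ≤ if m ∈ ({i - 1, i, i + 1} : Finset ℕ) then C else 0 := by
    intro m _
    split_ifs with hm
    · exact Kk_abs_le hC0 hC i m
    · simp only [Finset.mem_insert, Finset.mem_singleton] at hm
      push_neg at hm
      rw [Kk_eq_zero (by omega)]
      simp
  calc ∑ m ∈ Finset.range n, |Kk a b i m|
      ≤ ∑ m ∈ Finset.range n, (if m ∈ ({i - 1, i, i + 1} : Finset ℕ) then C else 0) :=
        Finset.sum_le_sum step
    _ = ∑ m ∈ Finset.range n ∩ {i - 1, i, i + 1}, C := by rw [Finset.sum_ite_mem]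
    _ = ((Finset.range n ∩ {i - 1, i, i + 1}).card : ℝ) * C := by
        rw [Finset.sum_const, nsmul_eq_mul]
    _ ≤ 3 * C := by
        refine mul_le_mul_of_nonneg_right ?_ hC0
        have h1 : (Finset.range n ∩ {i - 1, i, i + 1}).card ≤ ({i - 1, i, i + 1} : Finset ℕ).card :=
          Finset.card_le_card Finset.inter_subset_right
        have h2 : ({i - 1, i, i + 1} : Finset ℕ).card ≤ 3 := by
          have g1 := Finset.card_insert_le (i - 1) ({i, i + 1} : Finset ℕ)
          have g2 := Finset.card_insert_le i ({i + 1} : Finset ℕ)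
          simp only [Finset.card_singleton] at g1 g2
          omega
        exact_mod_cast le_trans h1 h2

lemma Ff_bound (a b : ℕ → ℝ) {C : ℝ} (hC0 : 0 ≤ C) (hC : ∀ i, |a i| ≤ C ∧ |b i| ≤ C) :
    ∀ (l n i j : ℕ), |Ff a b n l i j| ≤ (3 * C) ^ l := by
  intro l
  induction l with
  | zero =>
      intro n i j
      show |if i = j then (1:ℝ) else 0| ≤ 1
      split_ifs <;> norm_num
  | succ l ih =>
      intro n i j
      show |∑ m ∈ Finset.range n, Kk a b i m * Ff a b n l m j| ≤ _
      calc |∑ m ∈ Finset.range n, Kk a b i m * Ff a b n l m j|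
          ≤ ∑ m ∈ Finset.range n, |Kk a b i m * Ff a b n l m j| :=
            Finset.abs_sum_le_sum_abs _ _
        _ ≤ ∑ m ∈ Finset.range n, |Kk a b i m| * (3 * C) ^ l := by
            refine Finset.sum_le_sum fun m _ => ?_
            rw [abs_mul]
            exact mul_le_mul_of_nonneg_left (ih n m j) (abs_nonneg _)
        _ = (∑ m ∈ Finset.range n, |Kk a b i m|) * (3 * C) ^ l := by
            rw [Finset.sum_mul]
        _ ≤ (3 * C) * (3 * C) ^ l := by
            exact mul_le_mul_of_nonneg_right (sum_abs_Kk a b hC0 hC i n)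
              (pow_nonneg (by linarith) l)
        _ = (3 * C) ^ (l + 1) := (pow_succ' _ _).symm

noncomputable def Finf (a b : ℕ → ℝ) (l i j : ℕ) : ℝ := Ff a b (i + l + 1) l i j

lemma Ff_eq_Finf {a b : ℕ → ℝ} {n l i j : ℕ} (h : i + l < n) :
    Ff a b n l i j = Finf a b l i j :=
  Ff_loc a b l i j n (i + l + 1) h (by omega)

noncomputable def Pp : ℕ → ℤ → ℝ
  | 0, t => if t = 0 then 1 else 0
  | l + 1, t => (Pp l (t + 1) + Pp l (t - 1)) / 2

lemma Pp_eq : ∀ (l : ℕ) (t : ℤ), Pp l t =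
    if 2 ∣ ((l : ℤ) + t) ∧ -(l : ℤ) ≤ t
    then (Nat.choose l (((l : ℤ) + t).toNat / 2) : ℝ) / 2 ^ l else 0 := by
  intro l
  induction l with
  | zero =>
      intro t
      show (if t = 0 then (1:ℝ) else 0) = _
      by_cases ht : t = 0
      · subst ht; norm_num
      · rw [if_neg ht]
        split_ifs with h
        · have : 1 ≤ t.toNat / 2 := by omega
          rw [Nat.choose_eq_zero_of_lt (by omega)]
          norm_num
        · rfl
  | succ l ih =>
      intro t
      show (Pp l (t + 1) + Pp l (t - 1)) / 2 = _
      rw [ih (t + 1), ih (t - 1)]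
      by_cases hpar : 2 ∣ ((l : ℤ) + 1 + t)
      · rcases lt_trichotomy t (-(l : ℤ) - 1) with hlt | heq | hgt
        · rw [if_neg (by push_cast; omega), if_neg (by push_cast; omega),
            if_neg (by push_cast; omega)]
          norm_num
        · rw [if_pos (by push_cast; omega), if_neg (by push_cast; omega),
            if_pos (by push_cast; omega)]
          have e1 : ((l : ℤ) + (t + 1)).toNat / 2 = 0 := by omega
          have e2 : (((l : ℕ) + 1 : ℕ) : ℤ) = (l : ℤ) + 1 := by push_cast; ring
          have e3 : (((l + 1 : ℕ) : ℤ) + t).toNat / 2 = 0 := by push_cast; omega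
          rw [e1, e3]
          simp only [Nat.choose_zero_right, Nat.cast_one]
          rw [pow_succ]
          ring
        · -- t ≥ -l, with parity t ≥ -l + 1
          have hge : -(l : ℤ) + 1 ≤ t := by omega
          rw [if_pos (by push_cast; omega), if_pos (by push_cast; omega),
            if_pos (by push_cast; omega)]
          obtain ⟨k', hk'⟩ : ∃ k', (((l + 1 : ℕ) : ℤ) + t).toNat / 2 = k' + 1 :=
            ⟨(((l + 1 : ℕ) : ℤ) + t).toNat / 2 - 1, by push_cast; omega⟩
          have hk1 : ((l : ℤ) + (t + 1)).toNat / 2 = k' + 1 := by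
            push_cast at hk' ⊢; omega
          have hk2 : ((l : ℤ) + (t - 1)).toNat / 2 = k' := by
            push_cast at hk' ⊢; omega
          rw [hk', hk1, hk2, Nat.choose_succ_succ]
          push_cast
          rw [pow_succ]
          ring
      · rw [if_neg (by push_cast; omega), if_neg (by push_cast; omega),
          if_neg (by push_cast; omega)]
        norm_num

lemma Pp_zero (l : ℕ) :
    Pp l 0 = if l % 2 = 0 then (Nat.choose l (l / 2) : ℝ) / 2 ^ l else 0 := by
  rw [Pp_eq]
  by_cases h : l % 2 = 0
  · rw [if_pos (by constructor <;> omega), if_pos h]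
    have e : ((l : ℤ) + 0).toNat / 2 = l / 2 := by omega
    rw [e]
  · rw [if_neg (by omega), if_neg h]

open Filter in
lemma tendsto_Finf (a b : ℕ → ℝ)
    (haL : Tendsto a atTop (nhds (1 / 2))) (hbL : Tendsto b atTop (nhds 0)) :
    ∀ (l : ℕ) (t : ℤ),
      Tendsto (fun i : ℕ => Finf a b l i (((i : ℤ) + t).toNat)) atTop (nhds (Pp l t)) := by
  intro l
  induction l with
  | zero =>
      intro t
      refine Tendsto.congr' ?_ (tendsto_const_nhds (x := Pp 0 t))
      filter_upwards [eventually_ge_atTop (t.natAbs + 1)] with i hi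
      show (if t = 0 then (1:ℝ) else 0) = if i = ((i : ℤ) + t).toNat then 1 else 0
      split_ifs with h1 h2 h2 <;> first | rfl | omega
  | succ l ih =>
      intro t
      have h1 : Tendsto (fun i : ℕ => a i * Finf a b l (i - 1) (((↑(i - 1) : ℤ) + (t + 1)).toNat))
          atTop (nhds ((1 / 2) * Pp l (t + 1))) := by
        have := (ih (t + 1)).comp (tendsto_sub_atTop_nat 1)
        exact haL.mul this
      have h2 : Tendsto (fun i : ℕ => b i * Finf a b l i (((i : ℤ) + t).toNat))
          atTop (nhds (0 * Pp l t)) := hbL.mul (ih t)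
      have h3 : Tendsto (fun i : ℕ =>
          a (i + 1) * Finf a b l (i + 1) (((↑(i + 1) : ℤ) + (t - 1)).toNat))
          atTop (nhds ((1 / 2) * Pp l (t - 1))) := by
        have ha' := haL.comp (tendsto_add_atTop_nat 1)
        have hf' := (ih (t - 1)).comp (tendsto_add_atTop_nat 1)
        exact ha'.mul hf'
      have hsum := (h1.add h2).add h3
      have hval : (1 / 2) * Pp l (t + 1) + 0 * Pp l t + (1 / 2) * Pp l (t - 1) = Pp (l + 1) t := by
        show _ = (Pp l (t + 1) + Pp l (t - 1)) / 2
        ring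
      rw [hval] at hsum
      refine Tendsto.congr' ?_ hsum
      filter_upwards [eventually_ge_atTop (t.natAbs + 2)] with i hi
      have hi1 : 1 ≤ i := by omega
      have key : Finf a b (l + 1) i (((i : ℤ) + t).toNat)
          = a i * Ff a b (i + l + 2) l (i - 1) (((i : ℤ) + t).toNat)
            + b i * Ff a b (i + l + 2) l i (((i : ℤ) + t).toNat)
            + a (i + 1) * Ff a b (i + l + 2) l (i + 1) (((i : ℤ) + t).toNat) := by
        show ∑ m ∈ Finset.range (i + (l + 1) + 1), Kk a b i m *
            Ff a b (i + (l + 1) + 1) l m (((i : ℤ) + t).toNat) = _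
        rw [sum_range_Kk a b hi1 (by omega)]
        norm_num [show i + (l + 1) + 1 = i + l + 2 from by omega]
      have e1 : ((↑(i - 1) : ℤ) + (t + 1)).toNat = ((i : ℤ) + t).toNat := by omega
      have e3 : ((↑(i + 1) : ℤ) + (t - 1)).toNat = ((i : ℤ) + t).toNat := by push_cast; omega
      show _ = Finf a b (l + 1) i (((i : ℤ) + t).toNat)
      rw [key, e1, e3]
      rw [Ff_eq_Finf (by omega), Ff_eq_Finf (by omega), Ff_eq_Finf (by omega)]

open Filter in
lemma tendsto_avg_trace (a b : ℕ → ℝ)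
    (haL : Tendsto a atTop (nhds (1 / 2))) (hbL : Tendsto b atTop (nhds 0)) (l : ℕ) :
    Tendsto (fun n : ℕ => (1 / (n : ℝ)) * ∑ i ∈ Finset.range n, Ff a b n l i i)
      atTop (nhds (Pp l 0)) := by
  -- bound on a, b
  obtain ⟨Ca, hCa⟩ := (haL.abs.bddAbove_range : BddAbove (Set.range fun i => |a i|)).imp
    (fun Ca h => fun i => h (Set.mem_range_self i))
  obtain ⟨Cb, hCb⟩ := (hbL.abs.bddAbove_range : BddAbove (Set.range fun i => |b i|)).imp
    (fun Cb h => fun i => h (Set.mem_range_self i))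
  set C : ℝ := max Ca Cb ⊔ 0 with hCdef
  have hC0 : 0 ≤ C := le_max_right _ _
  have hC : ∀ i, |a i| ≤ C ∧ |b i| ≤ C := fun i =>
    ⟨le_trans (hCa i) (le_trans (le_max_left _ _) (le_max_left _ _)),
     le_trans (hCb i) (le_trans (le_max_right _ _) (le_max_left _ _))⟩
  set D : ℝ := 2 * (3 * C) ^ l with hDdef
  have hD0 : 0 ≤ D := by positivity
  -- limit of the diagonal
  have hg : Tendsto (fun i : ℕ => Finf a b l i i) atTop (nhds (Pp l 0)) := by
    have := tendsto_Finf a b haL hbL l 0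
    simpa using this
  have hces := hg.cesaro
  -- boundary error term
  have hdiff : Tendsto (fun n : ℕ =>
      (1 / (n : ℝ)) * ∑ i ∈ Finset.range n, (Ff a b n l i i - Finf a b l i i))
      atTop (nhds 0) := by
    have hbound : ∀ n : ℕ,
        ‖(1 / (n : ℝ)) * ∑ i ∈ Finset.range n, (Ff a b n l i i - Finf a b l i i)‖
          ≤ (1 / (n : ℝ)) * ((l : ℝ) * D) := by
      intro n
      rw [Real.norm_eq_abs, abs_mul, abs_of_nonneg (by positivity : (0:ℝ) ≤ 1 / (n:ℝ))]
      refine mul_le_mul_of_nonneg_left ?_ (by positivity)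
      calc |∑ i ∈ Finset.range n, (Ff a b n l i i - Finf a b l i i)|
          ≤ ∑ i ∈ Finset.range n, |Ff a b n l i i - Finf a b l i i| :=
            Finset.abs_sum_le_sum_abs _ _
        _ = ∑ i ∈ Finset.Ico (n - l) n, |Ff a b n l i i - Finf a b l i i| := by
            refine (Finset.sum_subset (fun i hi => ?_) (fun i hi hni => ?_)).symm
            · simp only [Finset.mem_Ico] at hi; simp only [Finset.mem_range]; omega
            · simp only [Finset.mem_range] at hi
              simp only [Finset.mem_Ico] at hni
              rw [Ff_eq_Finf (by omega), sub_self, abs_zero]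
        _ ≤ (Finset.Ico (n - l) n).card • D := by
            refine Finset.sum_le_card_nsmul _ _ _ fun i _ => ?_
            rw [sub_eq_add_neg]
            refine le_trans (abs_add_le _ _) ?_
            rw [abs_neg, hDdef, two_mul]
            exact add_le_add (Ff_bound a b hC0 hC l n i i) (Ff_bound a b hC0 hC l _ i i)
        _ ≤ (l : ℝ) * D := by
            rw [nsmul_eq_mul]
            refine mul_le_mul_of_nonneg_right ?_ hD0
            rw [Nat.card_Ico]
            have : n - (n - l) ≤ l := by omega
            exact_mod_cast Nat.cast_le.mpr this
    refine squeeze_zero_norm hbound ?_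
    have := tendsto_one_div_atTop_nhds_zero_nat.mul_const ((l : ℝ) * D)
    simpa using this
  have := hces.add hdiff
  rw [add_zero] at this
  refine this.congr fun n => ?_
  rw [one_div, ← mul_add, ← Finset.sum_add_distrib]
  congr 1
  exact Finset.sum_congr rfl fun i _ => by ring

section AuxIntegral
open Real MeasureTheory Set

lemma prod_central (k : ℕ) :
    ∏ i ∈ Finset.range k, ((2 * (i : ℝ) + 1) / (2 * i + 2))
      = (Nat.centralBinom k : ℝ) / 4 ^ k := by
  induction k with
  | zero => simp [Nat.centralBinom]
  | succ k ih =>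
      rw [Finset.prod_range_succ, ih]
      have h := Nat.succ_mul_centralBinom_succ k
      have h' : ((k : ℝ) + 1) * (Nat.centralBinom (k + 1) : ℝ)
          = 2 * (2 * k + 1) * (Nat.centralBinom k : ℝ) := by exact_mod_cast h
      have hk1 : ((k : ℝ) + 1) ≠ 0 := by positivity
      have h4 : (4 : ℝ) ^ (k + 1) ≠ 0 := by positivity
      field_simp
      linear_combination (-(2 * (4:ℝ) ^ k)) * h'

lemma sin_image_Ioo : Real.sin '' Set.Ioo (-(π / 2)) (π / 2) = Set.Ioo (-1 : ℝ) 1 := by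
  ext y
  constructor
  · rintro ⟨θ, hθ, rfl⟩
    have h1 : θ ∈ Set.Icc (-(π / 2)) (π / 2) := Ioo_subset_Icc_self hθ
    constructor
    · have := Real.strictMonoOn_sin (Set.left_mem_Icc.2 (by linarith [pi_pos])) h1 hθ.1
      simpa using this
    · have := Real.strictMonoOn_sin h1 (Set.right_mem_Icc.2 (by linarith [pi_pos])) hθ.2
      simpa using this
  · intro hy
    exact ⟨Real.arcsin y, ⟨Real.neg_pi_div_two_lt_arcsin.2 hy.1,
      Real.arcsin_lt_pi_div_two.2 hy.2⟩, Real.sin_arcsin hy.1.le hy.2.le⟩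

lemma arcsine_moment (l : ℕ) :
    (∫ x in Set.Ioo (-1 : ℝ) 1, x ^ l / (Real.pi * Real.sqrt (1 - x ^ 2)))
      = if l % 2 = 0 then (Nat.choose l (l / 2) : ℝ) / 2 ^ l else 0 := by
  have hcv := integral_image_eq_integral_abs_deriv_smul (measurableSet_Ioo :
      MeasurableSet (Set.Ioo (-(π / 2)) (π / 2)))
    (fun x _ => (Real.hasDerivAt_sin x).hasDerivWithinAt)
    (Real.injOn_sin.mono (fun x hx => Ioo_subset_Icc_self hx))
    (fun x => x ^ l / (π * Real.sqrt (1 - x ^ 2)))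
  rw [sin_image_Ioo] at hcv
  rw [hcv]
  have hEq : Set.EqOn
      (fun θ => |Real.cos θ| • (Real.sin θ ^ l / (π * Real.sqrt (1 - Real.sin θ ^ 2))))
      (fun θ => Real.sin θ ^ l / π) (Set.Ioo (-(π / 2)) (π / 2)) := by
    intro θ hθ
    have hc : 0 < Real.cos θ := Real.cos_pos_of_mem_Ioo hθ
    have hs : (1 : ℝ) - Real.sin θ ^ 2 = Real.cos θ ^ 2 := by
      have := Real.sin_sq_add_cos_sq θ; linarith
    simp only [smul_eq_mul, abs_of_pos hc, hs, Real.sqrt_sq hc.le]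
    field_simp
  rw [MeasureTheory.setIntegral_congr_fun measurableSet_Ioo hEq]
  have hIoo : (∫ θ in Set.Ioo (-(π / 2)) (π / 2), Real.sin θ ^ l / π)
      = (∫ θ in (-(π / 2))..(π / 2), Real.sin θ ^ l) / π := by
    rw [intervalIntegral.integral_of_le (by linarith [pi_pos]),
      ← MeasureTheory.integral_Ioc_eq_integral_Ioo, integral_div]
  rw [hIoo]
  have hint : ∀ c d : ℝ, IntervalIntegrable (fun x => Real.sin x ^ l) volume c d :=
    fun c d => (continuous_sin.pow l).intervalIntegrable c d
  rcases Nat.even_or_odd l with he | ho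
  · -- even case
    obtain ⟨k, hk⟩ := he
    have hev : Even l := ⟨k, hk⟩
    -- symmetric pieces
    have hneg : (∫ θ in (-(π / 2))..(0:ℝ), Real.sin θ ^ l)
        = ∫ θ in (0:ℝ)..(π / 2), Real.sin θ ^ l := by
      have := intervalIntegral.integral_comp_neg (a := (0:ℝ)) (b := π / 2)
        (fun x => Real.sin x ^ l)
      simp only [Real.sin_neg, hev.neg_pow, neg_zero] at this
      rw [← this]
    have hrefl : (∫ θ in (π / 2)..π, Real.sin θ ^ l)
        = ∫ θ in (0:ℝ)..(π / 2), Real.sin θ ^ l := by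
      have := intervalIntegral.integral_comp_sub_left (a := (0:ℝ)) (b := π / 2)
        (fun x => Real.sin x ^ l) π
      simp only [Real.sin_pi_sub, sub_zero] at this
      have e : π - π / 2 = π / 2 := by ring
      rw [e] at this
      rw [← this]
    have hsplit1 : (∫ θ in (-(π / 2))..(π / 2), Real.sin θ ^ l)
        = (∫ θ in (-(π / 2))..(0:ℝ), Real.sin θ ^ l) + ∫ θ in (0:ℝ)..(π / 2), Real.sin θ ^ l :=
      (intervalIntegral.integral_add_adjacent_intervals (hint _ _) (hint _ _)).symm
    have hsplit2 : (∫ θ in (0:ℝ)..π, Real.sin θ ^ l)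
        = (∫ θ in (0:ℝ)..(π / 2), Real.sin θ ^ l) + ∫ θ in (π / 2)..π, Real.sin θ ^ l :=
      (intervalIntegral.integral_add_adjacent_intervals (hint _ _) (hint _ _)).symm
    have hhalf : (∫ θ in (-(π / 2))..(π / 2), Real.sin θ ^ l)
        = ∫ θ in (0:ℝ)..π, Real.sin θ ^ l := by
      rw [hsplit1, hsplit2, hneg, hrefl]
    rw [hhalf]
    have : l = 2 * k := by omega
    subst this
    rw [if_pos (show 2 * k % 2 = 0 by omega)]
    rw [integral_sin_pow_even, prod_central]
    have hchn : Nat.centralBinom k = Nat.choose (2 * k) ((2 * k) / 2) := by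
      rw [Nat.centralBinom]
      congr 1
      omega
    have hch : (Nat.centralBinom k : ℝ) = (Nat.choose (2 * k) ((2 * k) / 2) : ℝ) := by
      rw [hchn]
    have h4 : (4 : ℝ) ^ k = 2 ^ (2 * k) := by
      rw [pow_mul]; norm_num
    rw [mul_comm π _, mul_div_cancel_right₀ _ Real.pi_ne_zero, hch, h4]
  · -- odd case
    have hl1 : l % 2 = 1 := Nat.odd_iff.mp ho
    rw [if_neg (by omega)]
    have h1 := intervalIntegral.integral_comp_neg (a := -(π / 2)) (b := π / 2)
      (fun x => Real.sin x ^ l)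
    simp only [Real.sin_neg, ho.neg_pow, neg_neg] at h1
    have h2 : (∫ θ in (-(π / 2))..(π / 2), (-(Real.sin θ ^ l)))
        = -∫ θ in (-(π / 2))..(π / 2), Real.sin θ ^ l := by
      rw [intervalIntegral.integral_neg]
    rw [h2] at h1
    have : (∫ θ in (-(π / 2))..(π / 2), Real.sin θ ^ l) = 0 := by linarith
    rw [this, zero_div]

end AuxIntegral

/-- Trace-moment form of zero distribution: if `a_n → 1/2` and `b_n → 0`, then for every
fixed `l`, `(1/n)·Tr(J_n^l)` converges to the `l`-th moment of the arcsine measure,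
`2^{−l}·C(l, l/2)` for even `l` and `0` for odd `l`. -/
theorem stmt18 (a b : ℕ → ℝ) (ha : ∀ n, 0 < a n)
    (haL : Filter.Tendsto a Filter.atTop (nhds (1 / 2)))
    (hbL : Filter.Tendsto b Filter.atTop (nhds 0)) (l : ℕ) :
    Filter.Tendsto (fun n : ℕ => (1 / (n : ℝ)) * Matrix.trace (jacobiMat a b n ^ l))
      Filter.atTop
      (nhds (if l % 2 = 0 then (Nat.choose l (l / 2) : ℝ) / 2 ^ l else 0)) ∧
    (∫ x in Set.Ioo (-1 : ℝ) 1, x ^ l / (Real.pi * Real.sqrt (1 - x ^ 2)))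
      = if l % 2 = 0 then (Nat.choose l (l / 2) : ℝ) / 2 ^ l else 0 := by
  constructor
  · have htr : ∀ n : ℕ, Matrix.trace (jacobiMat a b n ^ l)
        = ∑ i ∈ Finset.range n, Ff a b n l i i := by
      intro n
      rw [Matrix.trace, ← Fin.sum_univ_eq_sum_range (fun i => Ff a b n l i i) n]
      exact Finset.sum_congr rfl fun i _ => pow_jacobi_apply a b n l i i
    have h0 := tendsto_avg_trace a b haL hbL l
    rw [Pp_zero l] at h0
    exact h0.congr fun n => by rw [htr n]
  · exact arcsine_moment l
end
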